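/- arXiv:2005.10804 — 12 statements merged into one kernel-verified Lean document; each statement's English description precedes it below -/
import Mathlib

section
/- Let X be a set, F a class of real-valued functions on X, Z a finite multiset of elements of X, and z ∈ Z. Let f, f' ∈ F and c > 0 satisfy c/2 < (f(z) − f'(z))² ≤ c. Let j ≥ 1 be an integer and let Z_1, …, Z_{j−1} be pairwise disjoint sub-multisets of Z such that Z_1 ∪ ⋯ ∪ Z_{j−1} together with one additional copy of z is contained in Z, and suppose that z is √(c/2)-dependent on Z_k with respect to F for every k ∈ {1, …, j−1}. Then (f(z) − f'(z))² / ‖f − f'‖²_Z ≤ 2/j. -/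
/-- The squared data norm `‖g‖_Z² = ∑_{z ∈ Z} g(z)²`, counting multiplicity. -/
noncomputable def msNormSq {X : Type*} (Z : Multiset X) (g : X → ℝ) : ℝ :=
  (Z.map fun x => g x ^ 2).sum

/-- The data norm `‖g‖_Z = (∑_{z ∈ Z} g(z)²)^{1/2}`. -/
noncomputable def msNorm {X : Type*} (Z : Multiset X) (g : X → ℝ) : ℝ :=
  Real.sqrt (msNormSq Z g)

/-- `z` is `ε`-dependent on the multiset `Z` with respect to the function class `F`. -/
def EpsDep {X : Type*} (F : Set (X → ℝ)) (ε : ℝ) (Z : Multiset X) (z : X) : Prop :=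
  ∀ f ∈ F, ∀ f' ∈ F, msNorm Z (fun x => f x - f' x) ≤ ε → |f z - f' z| ≤ ε

lemma msNormSq_nonneg {X : Type*} (Z : Multiset X) (g : X → ℝ) : 0 ≤ msNormSq Z g := by
  apply Multiset.sum_nonneg
  intro x hx
  obtain ⟨y, _, rfl⟩ := Multiset.mem_map.mp hx
  positivity

lemma msNormSq_add {X : Type*} (A B : Multiset X) (g : X → ℝ) :
    msNormSq (A + B) g = msNormSq A g + msNormSq B g := by
  simp [msNormSq]

lemma msNormSq_mono {X : Type*} {A B : Multiset X} (h : A ≤ B) (g : X → ℝ) :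
    msNormSq A g ≤ msNormSq B g := by
  obtain ⟨C, rfl⟩ := Multiset.le_iff_exists_add.mp h
  rw [msNormSq_add]
  linarith [msNormSq_nonneg C g]

lemma msNormSq_sum {X ι : Type*} (s : Finset ι) (Zs : ι → Multiset X) (g : X → ℝ) :
    msNormSq (∑ k ∈ s, Zs k) g = ∑ k ∈ s, msNormSq (Zs k) g := by
  induction s using Finset.cons_induction with
  | empty => simp [msNormSq]
  | cons a s ha ih => simp [Finset.sum_cons, msNormSq_add, ih]

/-- if `c/2 < (f(z) − f'(z))² ≤ c`, and `z` is `√(c/2)`-dependent on each of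
`j − 1` pairwise disjoint sub-multisets `Z_1, …, Z_{j−1}` of `Z` whose disjoint union together
with one extra copy of `z` is contained in `Z`, then `(f(z) − f'(z))² / ‖f − f'‖²_Z ≤ 2/j`. -/
theorem sensitivity_ratio_le {X : Type*} (F : Set (X → ℝ)) (Z : Multiset X) (z : X)
    (hz : z ∈ Z) (f f' : X → ℝ) (hf : f ∈ F) (hf' : f' ∈ F)
    (c : ℝ) (hc : 0 < c)
    (hlow : c / 2 < (f z - f' z) ^ 2) (hhigh : (f z - f' z) ^ 2 ≤ c)
    (j : ℕ) (hj : 1 ≤ j) (Zs : Fin (j - 1) → Multiset X)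
    (hsub : (∑ k : Fin (j - 1), Zs k) + {z} ≤ Z)
    (hdep : ∀ k : Fin (j - 1), EpsDep F (Real.sqrt (c / 2)) (Zs k) z) :
    (f z - f' z) ^ 2 / msNormSq Z (fun x => f x - f' x) ≤ 2 / (j : ℝ) := by
  set g : X → ℝ := fun x => f x - f' x with hg
  set s : ℝ := (f z - f' z) ^ 2 with hs
  -- each block has norm² > c/2
  have hblock : ∀ k : Fin (j - 1), c / 2 ≤ msNormSq (Zs k) g := by
    intro k
    by_contra hlt
    push_neg at hlt
    have hle : msNorm (Zs k) g ≤ Real.sqrt (c / 2) :=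
      Real.sqrt_le_sqrt hlt.le
    have := hdep k f hf f' hf' hle
    have h2 : (f z - f' z) ^ 2 ≤ c / 2 := by
      nlinarith [this, abs_nonneg (f z - f' z), sq_abs (f z - f' z),
        Real.sq_sqrt (show (0:ℝ) ≤ c / 2 by linarith), Real.sqrt_nonneg (c / 2)]
    linarith
  have hNZ : msNormSq ((∑ k : Fin (j - 1), Zs k) + {z}) g ≤ msNormSq Z g :=
    msNormSq_mono hsub g
  have hsum : msNormSq ((∑ k : Fin (j - 1), Zs k) + {z}) g
      = (∑ k : Fin (j - 1), msNormSq (Zs k) g) + s := by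
    rw [msNormSq_add, msNormSq_sum]
    simp [msNormSq, hg, hs]
  have hsumlb : (j - 1 : ℕ) * (c / 2) ≤ ∑ k : Fin (j - 1), msNormSq (Zs k) g := by
    calc ((j - 1 : ℕ) : ℝ) * (c / 2) = ∑ _k : Fin (j - 1), (c / 2) := by
          simp [Finset.sum_const, Finset.card_univ, mul_comm]
      _ ≤ _ := Finset.sum_le_sum fun k _ => hblock k
  have hN : (j - 1 : ℕ) * (c / 2) + s ≤ msNormSq Z g := by
    rw [hsum] at hNZ; linarith
  have hspos : 0 < s := lt_of_le_of_lt (by positivity) hlow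
  have hNpos : 0 < msNormSq Z g := by
    have : ((j - 1 : ℕ) : ℝ) * (c / 2) ≥ 0 := by positivity
    linarith
  have hjpos : 0 < (j : ℝ) := by exact_mod_cast hj
  rw [div_le_div_iff₀ hNpos hjpos]
  have hcast : ((j - 1 : ℕ) : ℝ) = (j : ℝ) - 1 := by
    have := Nat.cast_sub hj (R := ℝ); simpa using this
  rw [hcast] at hN
  nlinarith [hjpos, hc, hhigh, hspos, hN, mul_le_mul_of_nonneg_left hhigh (sub_nonneg.mpr (by exact_mod_cast hj : (1:ℝ) ≤ j))]
end

section
/- Let X be a set, H ≥ 1 an integer, F a class of functions from X to [0, H+1], Z a nonempty finite multiset of elements of X, λ > 0, ε ∈ (0,1], δ ∈ (0,1), and suppose the covering number N(F, (ε/72)·√(λδ/|Z|)) is finite. Perform sensitivity subsampling of Z with parameters (λ, ε, δ). Then with probability at least 1 − δ/4, the size of the resulting multiset satisfies |Z'| = ∑_{z∈Z} X_z/p_z ≤ 4|Z|/δ. -/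
open MeasureTheory ProbabilityTheory


/-- There is a sequence of length `n` in `X` such that, for some `ε' ≥ ε`, every element
is `ε'`-independent of its predecessors with respect to `F`. -/
def EluderLen {X : Type*} (F : Set (X → ℝ)) (ε : ℝ) (n : ℕ) : Prop :=
  ∃ ε' ≥ ε, ∃ l : Fin n → X, ∀ i : Fin n,
    ¬ EpsDep F ε' ((Finset.univ.filter (fun j => j < i)).val.map l) (l i)

/-- The `λ`-sensitivity of `z` with respect to `Z` and `F` (0 if no admissible pair exists). -/
noncomputable def sensitivity {X : Type*} (F : Set (X → ℝ)) (lam : ℝ) (Z : Multiset X)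
    (z : X) : ℝ :=
  sSup {r : ℝ | ∃ f ∈ F, ∃ f' ∈ F,
    lam ≤ msNormSq Z (fun x => f x - f' x) ∧
    r = (f z - f' z) ^ 2 / msNormSq Z (fun x => f x - f' x)}

/-- `N` is the least cardinality of a subset `C ⊆ F` which is an `ε`-cover of `F` in
the supremum distance. -/
def IsCoverNum {X : Type*} (F : Set (X → ℝ)) (ε : ℝ) (N : ℕ) : Prop :=
  IsLeast {m : ℕ | ∃ C : Finset (X → ℝ), ↑C ⊆ F ∧
    (∀ f ∈ F, ∃ g ∈ C, ∀ x, |f x - g x| ≤ ε) ∧ C.card = m} N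

/-- `p` is the smallest real number such that `1/p` is a positive integer and
`p ≥ min{1, s · κ}`. -/
def IsSamplingProb (s κ p : ℝ) : Prop :=
  IsLeast {q : ℝ | (∃ m : ℕ, 0 < m ∧ q = 1 / (m : ℝ)) ∧ min 1 (s * κ) ≤ q} p

/-- Lemma 3 of the paper: with probability at least `1 − δ/4`, the size of
the sensitivity subsample satisfies `|Z'| = ∑_{z∈Z} X_z/p_z ≤ 4|Z|/δ`. -/
theorem subsample_size_bound {X : Type*} {Ω : Type*} [MeasurableSpace Ω]
    (μ : Measure Ω) [IsProbabilityMeasure μ]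
    (H : ℕ) (hH : 1 ≤ H)
    (F : Set (X → ℝ)) (hF : ∀ f ∈ F, ∀ x, f x ∈ Set.Icc (0 : ℝ) (H + 1))
    (n : ℕ) (hn : 1 ≤ n) (zs : Fin n → X)
    (lam : ℝ) (hlam0 : 0 < lam)
    (ε : ℝ) (hε : ε ∈ Set.Ioc (0 : ℝ) 1) (δ : ℝ) (hδ : δ ∈ Set.Ioo (0 : ℝ) 1)
    (N : ℕ) (hN : IsCoverNum F ((ε / 72) * Real.sqrt (lam * δ / (n : ℝ))) N)
    (p : Fin n → ℝ)
    (hp : ∀ i, IsSamplingProb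
      (sensitivity F lam (Multiset.map zs Finset.univ.val) (zs i))
      (72 * Real.log (4 * (N : ℝ) / δ) / ε ^ 2) (p i))
    (B : Fin n → Ω → ℝ) (hmeas : ∀ i, Measurable (B i))
    (hval : ∀ i ω, B i ω = 0 ∨ B i ω = 1)
    (hber : ∀ i, μ {ω | B i ω = 1} = ENNReal.ofReal (p i))
    (hindep : iIndepFun B μ) :
    ENNReal.ofReal (1 - δ / 4) ≤
      μ {ω | ∑ i, B i ω / p i ≤ 4 * (n : ℝ) / δ} := by
  obtain ⟨hε0, hε1⟩ := hε
  obtain ⟨hδ0, hδ1⟩ := hδ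
  have hn0 : (0:ℝ) < n := by exact_mod_cast hn
  -- positivity of p
  have hppos : ∀ i, 0 < p i := by
    intro i
    obtain ⟨⟨⟨m, hm, hpm⟩, _⟩, _⟩ := hp i
    rw [hpm]
    positivity
  have hBnn : ∀ i ω, 0 ≤ B i ω := by
    intro i ω; rcases hval i ω with h | h <;> rw [h] <;> norm_num
  set S : Ω → ℝ := fun ω => ∑ i, B i ω / p i with hS
  have hSnn : ∀ ω, 0 ≤ S ω := fun ω =>
    Finset.sum_nonneg fun i _ => div_nonneg (hBnn i ω) (hppos i).le
  have hSmeas : Measurable S := by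
    apply Finset.measurable_sum
    intro i _
    exact (hmeas i).div_const _
  -- lintegral of each term
  have hterm : ∀ i, ∫⁻ ω, ENNReal.ofReal (B i ω / p i) ∂μ = 1 := by
    intro i
    have hind : (fun ω => ENNReal.ofReal (B i ω)) =
        Set.indicator {ω | B i ω = 1} (fun _ => (1:ENNReal)) := by
      funext ω
      rcases hval i ω with h | h
      · rw [Set.indicator_of_notMem, h, ENNReal.ofReal_zero]
        simp [h]
      · rw [Set.indicator_of_mem, h, ENNReal.ofReal_one]
        exact h
    have hB1 : ∫⁻ ω, ENNReal.ofReal (B i ω) ∂μ = ENNReal.ofReal (p i) := by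
      simp only [hind]
      rw [lintegral_indicator (show MeasurableSet {ω | B i ω = 1} from (hmeas i) (measurableSet_singleton 1)),
        setLIntegral_const, one_mul, hber i]
    calc ∫⁻ ω, ENNReal.ofReal (B i ω / p i) ∂μ
        = ∫⁻ ω, ENNReal.ofReal (1 / p i) * ENNReal.ofReal (B i ω) ∂μ := by
          congr 1; funext ω
          rw [← ENNReal.ofReal_mul (one_div_nonneg.mpr (hppos i).le)]
          congr 1; field_simp
      _ = ENNReal.ofReal (1 / p i) * ENNReal.ofReal (p i) := by
          rw [lintegral_const_mul _ ((hmeas i).ennreal_ofReal), hB1]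
      _ = 1 := by
          rw [← ENNReal.ofReal_mul (one_div_nonneg.mpr (hppos i).le), one_div,
            inv_mul_cancel₀ (hppos i).ne', ENNReal.ofReal_one]
  have hSint : ∫⁻ ω, ENNReal.ofReal (S ω) ∂μ = n := by
    have : ∀ ω, ENNReal.ofReal (S ω) = ∑ i, ENNReal.ofReal (B i ω / p i) := by
      intro ω
      exact ENNReal.ofReal_sum_of_nonneg fun i _ => div_nonneg (hBnn i ω) (hppos i).le
    simp_rw [this]
    rw [lintegral_finset_sum _ fun i _ => ((hmeas i).div_const _).ennreal_ofReal]
    simp [hterm]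
  -- Markov
  set c : ℝ := 4 * (n:ℝ) / δ with hc
  have hcpos : 0 < c := by positivity
  have hmarkov : μ {ω | ENNReal.ofReal c ≤ ENNReal.ofReal (S ω)} ≤ ENNReal.ofReal (δ / 4) := by
    have := meas_ge_le_lintegral_div (μ := μ) (hSmeas.ennreal_ofReal).aemeasurable
      (ε := ENNReal.ofReal c) (ENNReal.ofReal_pos.mpr hcpos).ne' ENNReal.ofReal_ne_top
    refine this.trans ?_
    rw [hSint]
    have : (n : ENNReal) = ENNReal.ofReal (n : ℝ) := by simp
    rw [this, ← ENNReal.ofReal_div_of_pos hcpos]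
    apply ENNReal.ofReal_le_ofReal
    rw [hc]
    rw [div_div_eq_mul_div, div_le_div_iff₀ (by positivity) (by norm_num)]
    ring_nf
    nlinarith
  have hsub : {ω | S ω ≤ c}ᶜ ⊆ {ω | ENNReal.ofReal c ≤ ENNReal.ofReal (S ω)} := by
    intro ω hω
    simp only [Set.mem_compl_iff, Set.mem_setOf_eq, not_le] at hω ⊢
    exact ENNReal.ofReal_le_ofReal hω.le
  have hcompl : μ {ω | S ω ≤ c}ᶜ ≤ ENNReal.ofReal (δ / 4) :=
    (measure_mono hsub).trans hmarkov
  have h1 : (1 : ENNReal) ≤ μ {ω | S ω ≤ c} + μ {ω | S ω ≤ c}ᶜ := by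
    have := measure_union_le (μ := μ) {ω | S ω ≤ c} {ω | S ω ≤ c}ᶜ
    rwa [Set.union_compl_self, measure_univ] at this
  calc ENNReal.ofReal (1 - δ / 4)
      = 1 - ENNReal.ofReal (δ / 4) := by
        rw [ENNReal.ofReal_sub _ (by positivity), ENNReal.ofReal_one]
    _ ≤ 1 - μ {ω | S ω ≤ c}ᶜ := tsub_le_tsub_left hcompl 1
    _ ≤ μ {ω | S ω ≤ c} := by
        rw [tsub_le_iff_right]
        exact h1
end

section
/- Let X be a set, H ≥ 1 an integer, F a class of functions from X to [0, H+1], Z a nonempty finite multiset of elements of X, λ > 0, ε ∈ (0,1), δ ∈ (0,1), and suppose N := N(F, (ε/72)·√(λδ/|Z|)) is finite. Perform sensitivity subsampling of Z with parameters (λ, ε, δ). Then for any fixed pair f, f' ∈ F with ‖f − f'‖²_Z ≥ λ, the probability that |‖f − f'‖²_{Z'} − ‖f − f'‖²_Z| ≥ (ε/4)·‖f − f'‖²_Z is at most (δ/4)/N². -/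
open MeasureTheory ProbabilityTheory


lemma aux_sq_sub_le {x y c : ℝ} (hx0 : 0 ≤ x) (hx : x ≤ c) (hy0 : 0 ≤ y) (hy : y ≤ c) :
    (x - y)^2 ≤ c^2 := by nlinarith

lemma aux_exp_quad {u : ℝ} (hu : |u| ≤ 1/5) : Real.exp u ≤ 1 + u + (5/9)*u^2 := by
  have h1 : |u| ≤ 1 := hu.trans (by norm_num)
  have h := Real.exp_bound h1 (n := 3) (by norm_num)
  have hsum : ∑ m ∈ Finset.range 3, u ^ m / m.factorial = 1 + u + u^2/2 := by
    simp [Finset.sum_range_succ, Nat.factorial]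
  rw [hsum] at h
  have h2 := (abs_sub_le_iff.1 h).1
  have h3 : |u| ^ 3 = |u| * u^2 := by
    rw [show (3:ℕ) = 2 + 1 by rfl, pow_succ, sq_abs, mul_comm]
  have h4 : |u| * u^2 ≤ (1/5) * u^2 := by nlinarith [sq_nonneg u]
  rw [h3] at h2
  norm_num [Nat.factorial] at h2
  nlinarith [sq_nonneg u]

lemma aux_bern_int {Ω : Type*} [MeasurableSpace Ω] {μ : Measure Ω} [IsProbabilityMeasure μ]
    {Bf : Ω → ℝ} (hm : Measurable Bf) (hv : ∀ ω, Bf ω = 0 ∨ Bf ω = 1) :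
    Integrable Bf μ := by
  refine Integrable.mono' (integrable_const 1) hm.aestronglyMeasurable (ae_of_all _ fun ω => ?_)
  rcases hv ω with h | h <;> rw [h] <;> norm_num

lemma aux_bern_integral {Ω : Type*} [MeasurableSpace Ω] {μ : Measure Ω} [IsProbabilityMeasure μ]
    {Bf : Ω → ℝ} (hm : Measurable Bf) (hv : ∀ ω, Bf ω = 0 ∨ Bf ω = 1)
    {q : ℝ} (hq0 : 0 ≤ q) (hb : μ {ω | Bf ω = 1} = ENNReal.ofReal q) :
    ∫ ω, Bf ω ∂μ = q := by
  have hs : MeasurableSet {ω | Bf ω = 1} := hm (measurableSet_singleton 1)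
  have heq : Bf = Set.indicator {ω | Bf ω = 1} (fun _ => (1:ℝ)) := by
    funext ω
    rcases hv ω with h | h
    · rw [h, Set.indicator_of_notMem]
      simp [Set.mem_setOf_eq, h]
    · rw [h, Set.indicator_of_mem (by simpa [Set.mem_setOf_eq] using h)]
  rw [heq, integral_indicator_const _ hs, measureReal_def, hb, ENNReal.toReal_ofReal hq0, smul_eq_mul, mul_one]

lemma aux_bern_mgf {Ω : Type*} [MeasurableSpace Ω] {μ : Measure Ω} [IsProbabilityMeasure μ]
    {Bf : Ω → ℝ} (hm : Measurable Bf) (hv : ∀ ω, Bf ω = 0 ∨ Bf ω = 1)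
    {q : ℝ} (hq0 : 0 ≤ q) (hb : μ {ω | Bf ω = 1} = ENNReal.ofReal q) (c t : ℝ) :
    mgf (fun ω => Bf ω * c) μ t = 1 + q * (Real.exp (t*c) - 1) := by
  have hpt : ∀ ω, Real.exp (t * (Bf ω * c)) = 1 + (Real.exp (t*c) - 1) * Bf ω := by
    intro ω
    rcases hv ω with h | h <;> rw [h] <;> simp [mul_comm]
  rw [mgf]
  simp only [hpt]
  rw [integral_add (integrable_const 1) ((aux_bern_int hm hv).const_mul _),
    MeasureTheory.integral_const_mul, aux_bern_integral hm hv hq0 hb]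
  simp [mul_comm]


set_option maxHeartbeats 2000000

/-- for a fixed pair `f, f' ∈ F` with `‖f − f'‖²_Z ≥ λ`, the probability that
`|‖f − f'‖²_{Z'} − ‖f − f'‖²_Z| ≥ (ε/4)·‖f − f'‖²_Z` is at most `(δ/4)/N²`. -/
theorem subsample_fixed_pair_concentration {X : Type*} {Ω : Type*} [MeasurableSpace Ω]
    (μ : Measure Ω) [IsProbabilityMeasure μ]
    (H : ℕ) (hH : 1 ≤ H)
    (F : Set (X → ℝ)) (hF : ∀ f ∈ F, ∀ x, f x ∈ Set.Icc (0 : ℝ) (H + 1))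
    (n : ℕ) (hn : 1 ≤ n) (zs : Fin n → X)
    (lam : ℝ) (hlam0 : 0 < lam)
    (ε : ℝ) (hε : ε ∈ Set.Ioo (0 : ℝ) 1) (δ : ℝ) (hδ : δ ∈ Set.Ioo (0 : ℝ) 1)
    (N : ℕ) (hN : IsCoverNum F ((ε / 72) * Real.sqrt (lam * δ / (n : ℝ))) N)
    (p : Fin n → ℝ)
    (hp : ∀ i, IsSamplingProb
      (sensitivity F lam (Multiset.map zs Finset.univ.val) (zs i))
      (72 * Real.log (4 * (N : ℝ) / δ) / ε ^ 2) (p i))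
    (B : Fin n → Ω → ℝ) (hmeas : ∀ i, Measurable (B i))
    (hval : ∀ i ω, B i ω = 0 ∨ B i ω = 1)
    (hber : ∀ i, μ {ω | B i ω = 1} = ENNReal.ofReal (p i))
    (hindep : iIndepFun B μ)
    (f f' : X → ℝ) (hf : f ∈ F) (hf' : f' ∈ F)
    (hsep : lam ≤ msNormSq (Multiset.map zs Finset.univ.val) (fun x => f x - f' x)) :
    μ {ω | (ε / 4) * msNormSq (Multiset.map zs Finset.univ.val) (fun x => f x - f' x) ≤
        |(∑ i, (B i ω / p i) * (f (zs i) - f' (zs i)) ^ 2) -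
          msNormSq (Multiset.map zs Finset.univ.val) (fun x => f x - f' x)|} ≤
      ENNReal.ofReal ((δ / 4) / (N : ℝ) ^ 2) := by
  obtain ⟨hε0, hε1⟩ := hε
  obtain ⟨hδ0, hδ1⟩ := hδ
  classical
  set Z : Multiset X := Multiset.map zs Finset.univ.val with hZdef
  set d : Fin n → ℝ := fun i => f (zs i) - f' (zs i) with hddef
  set S : ℝ := ∑ i, d i ^ 2 with hSdef
  have hmsS : msNormSq Z (fun x => f x - f' x) = S := by
    rw [hZdef, msNormSq, Multiset.map_map, hSdef]
    rfl
  have hde : ∀ i, f (zs i) - f' (zs i) = d i := fun i => by rw [hddef]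
  rw [hmsS]
  simp only [hde]
  have hSsum : S = ∑ i, d i ^ 2 := hSdef
  have hS0 : 0 < S := lt_of_lt_of_le hlam0 (hmsS ▸ hsep)
  -- N ≥ 1
  have hN1 : 1 ≤ N := by
    obtain ⟨C, hCF, hcover, hcard⟩ := hN.1
    obtain ⟨g, hg, -⟩ := hcover f hf
    rw [← hcard]
    exact Finset.card_pos.2 ⟨g, hg⟩
  have hN1R : (1:ℝ) ≤ N := by exact_mod_cast hN1
  set L : ℝ := Real.log (4 * N / δ) with hLdef
  have h4N : (1:ℝ) < 4 * N / δ := by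
    rw [lt_div_iff₀ hδ0]
    nlinarith
  have hLpos : 0 < L := Real.log_pos h4N
  have hexpL : Real.exp L = 4 * N / δ := Real.exp_log (by linarith)
  set κ : ℝ := 72 * L / ε ^ 2 with hκdef
  have hκpos : 0 < κ := by positivity
  set M : ℝ := S / κ with hMdef
  have hM0 : 0 < M := by positivity
  set t : ℝ := ε * κ / (5 * S) with htdef
  have ht0 : 0 < t := by positivity
  have htM : t * M = ε / 5 := by
    rw [htdef, hMdef]
    field_simp
  -- the two exponent identities
  have hexpo1 : -t * ((1 + ε/4) * S) + (1 * t * S + (5/9) * t^2 * M * S) = -(2*L) := by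
    rw [htdef, hMdef, hκdef]
    field_simp
    ring
  have hexpo2 : -t * ((ε/4 - 1) * S) + ((-1) * t * S + (5/9) * t^2 * M * S) = -(2*L) := by
    rw [htdef, hMdef, hκdef]
    field_simp
    ring
  -- p facts
  have hp_pos : ∀ i, 0 < p i := by
    intro i
    obtain ⟨⟨m, hm, hpm⟩, -⟩ := (hp i).1
    rw [hpm]
    positivity
  have hp_le1 : ∀ i, p i ≤ 1 := fun i =>
    (hp i).2 ⟨⟨1, one_pos, by norm_num⟩, min_le_left _ _⟩
  -- sensitivity lower bound
  have hsens : ∀ i, d i ^ 2 / S ≤ sensitivity F lam Z (zs i) := by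
    intro i
    apply le_csSup
    · refine ⟨((H:ℝ)+1)^2 / lam, ?_⟩
      rintro r ⟨g, hg, g', hg', hQ, rfl⟩
      have h1 := hF g hg (zs i)
      have h2 := hF g' hg' (zs i)
      have hnum : (g (zs i) - g' (zs i))^2 ≤ ((H:ℝ)+1)^2 :=
        aux_sq_sub_le h1.1 h1.2 h2.1 h2.2
      exact div_le_div₀ (by positivity) hnum hlam0 hQ
    · exact ⟨f, hf, f', hf', hsep, by rw [hmsS]⟩
  -- dichotomy
  set a : Fin n → ℝ := fun i => d i ^ 2 / p i with hadef
  have ha_nonneg : ∀ i, 0 ≤ a i := by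
    intro i
    have := hp_pos i
    rw [hadef]
    positivity
  have hpa : ∀ i, p i * a i = d i ^ 2 := by
    intro i
    rw [hadef]
    field_simp
    exact mul_div_cancel_left₀ _ (hp_pos i).ne'
  have hWa : ∀ i (ω : Ω), B i ω / p i * d i ^ 2 = B i ω * (1 * a i) := by
    intro i ω
    rw [hadef]
    field_simp
  have hdich : ∀ i, p i = 1 ∨ a i ≤ M := by
    intro i
    by_cases hc : 1 ≤ sensitivity F lam Z (zs i) * κ
    · left
      have hmin : min 1 (sensitivity F lam Z (zs i) * κ) = 1 := min_eq_left hc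
      have := ((hp i).1).2
      rw [hmin] at this
      exact le_antisymm (hp_le1 i) this
    · right
      push_neg at hc
      have hmin : min 1 (sensitivity F lam Z (zs i) * κ) =
          sensitivity F lam Z (zs i) * κ := min_eq_right hc.le
      have h2 : sensitivity F lam Z (zs i) * κ ≤ p i := by
        rw [← hmin]; exact ((hp i).1).2
      have h3 : d i ^ 2 / S * κ ≤ p i :=
        le_trans (mul_le_mul_of_nonneg_right (hsens i) hκpos.le) h2
      rw [hadef]
      rw [div_le_iff₀ (hp_pos i), hMdef]
      calc d i ^ 2 = (d i ^ 2 / S * κ) * (S / κ) := by field_simp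
        _ ≤ p i * (S / κ) := mul_le_mul_of_nonneg_right h3 (by positivity)
        _ = S / κ * p i := by ring
  have hpa1 : ∀ i, p i = 1 → a i = d i ^ 2 := by
    intro i h1
    have := hpa i
    rw [h1, one_mul] at this
    exact this
  -- make everything opaque
  clear_value Z d S L κ M t a
  clear hZdef hddef hSdef hLdef hκdef hMdef htdef hadef hmsS hsep hN hp
  -- per-index mgf bound
  have hmgf_i : ∀ (σ : ℝ), σ = 1 ∨ σ = -1 → ∀ i,
      mgf (fun ω => B i ω * (σ * a i)) μ t ≤
        Real.exp (σ * t * d i ^ 2 + (5/9) * t^2 * M * d i ^ 2) := by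
    intro σ hσ i
    have hσsq : σ^2 = 1 := by rcases hσ with h|h <;> rw [h] <;> norm_num
    have hσabs : |σ| = 1 := by rcases hσ with h|h <;> rw [h] <;> norm_num
    rw [aux_bern_mgf (hmeas i) (hval i) (hp_pos i).le (hber i)]
    rcases hdich i with h1 | h2
    · rw [h1, hpa1 i h1]
      have heq : 1 + 1 * (Real.exp (t * (σ * d i ^ 2)) - 1)
          = Real.exp (t * (σ * d i ^ 2)) := by ring
      rw [heq]
      apply Real.exp_le_exp.2
      have h5 : 0 ≤ (5/9) * t^2 * M * d i ^ 2 := by positivity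
      nlinarith [h5]
    · have hu : |t * (σ * a i)| ≤ 1/5 := by
        rw [abs_mul, abs_mul, hσabs, abs_of_nonneg ht0.le, abs_of_nonneg (ha_nonneg i), one_mul]
        calc t * a i ≤ t * M := mul_le_mul_of_nonneg_left h2 ht0.le
          _ = ε / 5 := htM
          _ ≤ 1/5 := by linarith
      have hexp := aux_exp_quad hu
      have hq1 : 1 + p i * (Real.exp (t * (σ * a i)) - 1)
          ≤ 1 + p i * ((t * (σ * a i)) + (5/9)*(t*(σ*a i))^2) := by
        have hpn := (hp_pos i).le
        nlinarith [hexp]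
      have hq2 : 1 + p i * ((t * (σ * a i)) + (5/9)*(t*(σ*a i))^2)
          ≤ Real.exp (p i * ((t * (σ * a i)) + (5/9)*(t*(σ*a i))^2)) := by
        have := Real.add_one_le_exp (p i * ((t * (σ * a i)) + (5/9)*(t*(σ*a i))^2))
        linarith
      have hq3 : p i * ((t * (σ * a i)) + (5/9)*(t*(σ*a i))^2)
          ≤ σ * t * d i ^ 2 + (5/9) * t^2 * M * d i ^ 2 := by
        have e0 : (t*(σ*a i))^2 = t^2 * (a i)^2 := by
          rw [mul_pow, mul_pow, hσsq, one_mul]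
        have e1 : p i * (t * (σ * a i)) = σ * t * d i ^ 2 := by
          rw [← hpa i]; ring
        have e2 : p i * ((5/9)*(t*(σ*a i))^2) = (5/9) * t^2 * a i * d i ^ 2 := by
          rw [e0, ← hpa i]; ring
        have e3 : (5/9) * t^2 * a i * d i ^ 2 ≤ (5/9) * t^2 * M * d i ^ 2 := by
          gcongr
        nlinarith [e1, e2, e3]
      calc 1 + p i * (Real.exp (t * (σ * a i)) - 1)
          ≤ Real.exp (p i * ((t * (σ * a i)) + (5/9)*(t*(σ*a i))^2)) := le_trans hq1 hq2
        _ ≤ Real.exp (σ * t * d i ^ 2 + (5/9) * t^2 * M * d i ^ 2) := Real.exp_le_exp.2 hq3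
  -- the sum variables
  set V : ℝ → Ω → ℝ := fun σ ω => ∑ i, B i ω * (σ * a i) with hVdef
  have hVmeas : ∀ σ, Measurable (V σ) := by
    intro σ
    rw [hVdef]
    exact Finset.measurable_sum _ (fun i _ => (hmeas i).mul_const _)
  have hVsum : ∀ σ, (∑ i, fun ω => B i ω * (σ * a i)) = V σ := by
    intro σ
    funext ω
    rw [hVdef]
    simp [Finset.sum_apply]
  have hVindep : ∀ σ : ℝ, iIndepFun
      (fun i => fun ω => B i ω * (σ * a i)) μ :=
    fun σ => hindep.comp (fun i => fun x => x * (σ * a i))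
      (fun i => measurable_id.mul_const _)
  have hVbound : ∀ (σ : ℝ), |σ| = 1 → ∀ ω, V σ ω ≤ ∑ i, a i := by
    intro σ hσ ω
    rw [hVdef]
    refine Finset.sum_le_sum fun i _ => ?_
    have hai := ha_nonneg i
    have hs1 : σ ≤ 1 := by
      have := le_abs_self σ
      linarith [hσ ▸ this]
    rcases hval i ω with h | h <;> rw [h] <;> nlinarith
  have hVint : ∀ (σ : ℝ), |σ| = 1 →
      Integrable (fun ω => Real.exp (t * V σ ω)) μ := by
    intro σ hσ
    refine Integrable.mono' (integrable_const (Real.exp (t * ∑ i, a i)))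
      (((hVmeas σ).const_mul t).exp.aestronglyMeasurable)
      (ae_of_all _ fun ω => ?_)
    simp only [Real.norm_eq_abs]
    rw [abs_of_nonneg (Real.exp_pos _).le]
    exact Real.exp_le_exp.2 (mul_le_mul_of_nonneg_left (hVbound σ hσ ω) ht0.le)
  -- mgf of the sums
  have hmgf_sum : ∀ (σ : ℝ), σ = 1 ∨ σ = -1 →
      mgf (V σ) μ t ≤ Real.exp (σ * t * S + (5/9) * t^2 * M * S) := by
    intro σ hσ
    rw [← hVsum σ, (hVindep σ).mgf_sum (fun i => (hmeas i).mul_const _) Finset.univ]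
    calc ∏ i, mgf (fun ω => B i ω * (σ * a i)) μ t
        ≤ ∏ i, Real.exp (σ * t * d i ^ 2 + (5/9) * t^2 * M * d i ^ 2) :=
          Finset.prod_le_prod (fun i _ => mgf_nonneg) (fun i _ => hmgf_i σ hσ i)
      _ = Real.exp (∑ i, (σ * t * d i ^ 2 + (5/9) * t^2 * M * d i ^ 2)) :=
          (Real.exp_sum _ _).symm
      _ = Real.exp (σ * t * S + (5/9) * t^2 * M * S) := by
          rw [Finset.sum_add_distrib, ← Finset.mul_sum, ← Finset.mul_sum, ← hSsum]
  -- Chernoff, upper tail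
  have hup : μ {ω | (1 + ε/4) * S ≤ V 1 ω} ≤ ENNReal.ofReal (Real.exp (-(2*L))) := by
    rw [ENNReal.le_ofReal_iff_toReal_le (measure_ne_top μ _) (Real.exp_pos _).le]
    refine (measure_ge_le_exp_mul_mgf ((1 + ε/4) * S) ht0.le (hVint 1 (by norm_num))).trans ?_
    calc Real.exp (-t * ((1 + ε/4) * S)) * mgf (V 1) μ t
        ≤ Real.exp (-t * ((1 + ε/4) * S)) * Real.exp (1 * t * S + (5/9) * t^2 * M * S) := by
          exact mul_le_mul_of_nonneg_left (hmgf_sum 1 (Or.inl rfl)) (Real.exp_pos _).le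
      _ = Real.exp (-t * ((1 + ε/4) * S) + (1 * t * S + (5/9) * t^2 * M * S)) :=
          (Real.exp_add _ _).symm
      _ = Real.exp (-(2*L)) := by rw [hexpo1]
  -- Chernoff, lower tail
  have hlow : μ {ω | (ε/4 - 1) * S ≤ V (-1) ω} ≤ ENNReal.ofReal (Real.exp (-(2*L))) := by
    rw [ENNReal.le_ofReal_iff_toReal_le (measure_ne_top μ _) (Real.exp_pos _).le]
    refine (measure_ge_le_exp_mul_mgf ((ε/4 - 1) * S) ht0.le (hVint (-1) (by norm_num))).trans ?_
    calc Real.exp (-t * ((ε/4 - 1) * S)) * mgf (V (-1)) μ t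
        ≤ Real.exp (-t * ((ε/4 - 1) * S)) * Real.exp ((-1) * t * S + (5/9) * t^2 * M * S) := by
          exact mul_le_mul_of_nonneg_left (hmgf_sum (-1) (Or.inr rfl)) (Real.exp_pos _).le
      _ = Real.exp (-t * ((ε/4 - 1) * S) + ((-1) * t * S + (5/9) * t^2 * M * S)) :=
          (Real.exp_add _ _).symm
      _ = Real.exp (-(2*L)) := by rw [hexpo2]
  -- event inclusion
  have hVneg : ∀ ω, V (-1) ω = -(V 1 ω) := by
    intro ω
    rw [hVdef]
    simp only
    rw [← Finset.sum_neg_distrib]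
    exact Finset.sum_congr rfl (fun i _ => by ring)
  have hW : ∀ ω, (∑ i, B i ω / p i * d i ^ 2) = V 1 ω := by
    intro ω
    rw [hVdef]
    exact Finset.sum_congr rfl (fun i _ => hWa i ω)
  have hincl : {ω | ε / 4 * S ≤ |(∑ i, B i ω / p i * d i ^ 2) - S|}
      ⊆ {ω | (1 + ε/4) * S ≤ V 1 ω} ∪ {ω | (ε/4 - 1) * S ≤ V (-1) ω} := by
    intro ω hω
    simp only [Set.mem_setOf_eq] at hω
    rw [hW ω] at hω
    rcases le_abs.1 hω with h | h
    · left
      simp only [Set.mem_setOf_eq]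
      nlinarith
    · right
      simp only [Set.mem_setOf_eq, hVneg ω]
      nlinarith
  -- final numeric bound
  have hfinal : 2 * Real.exp (-(2*L)) ≤ (δ/4) / (N:ℝ)^2 := by
    have hNpos : (0:ℝ) < N := by linarith
    have hEL : Real.exp (-L) = δ / (4*N) := by
      rw [Real.exp_neg, hexpL, inv_div]
    have he : Real.exp (-(2*L)) = (δ / (4*N))^2 := by
      rw [show -(2*L) = -L + -L by ring, Real.exp_add, hEL]
      ring
    have hNne : (N:ℝ) ≠ 0 := by positivity
    have h8 : 2 * (δ/(4*N))^2 = (δ*δ/8) / (N:ℝ)^2 := by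
      field_simp
      ring
    rw [he, h8]
    have h9 : δ*δ/8 ≤ δ/4 := by nlinarith
    gcongr
  calc μ {ω | ε / 4 * S ≤ |(∑ i, B i ω / p i * d i ^ 2) - S|}
      ≤ μ ({ω | (1 + ε/4) * S ≤ V 1 ω} ∪ {ω | (ε/4 - 1) * S ≤ V (-1) ω}) :=
        measure_mono hincl
    _ ≤ μ {ω | (1 + ε/4) * S ≤ V 1 ω} + μ {ω | (ε/4 - 1) * S ≤ V (-1) ω} :=
        measure_union_le _ _
    _ ≤ ENNReal.ofReal (Real.exp (-(2*L))) + ENNReal.ofReal (Real.exp (-(2*L))) :=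
        add_le_add hup hlow
    _ = ENNReal.ofReal (2 * Real.exp (-(2*L))) := by
        rw [← ENNReal.ofReal_add (Real.exp_pos _).le (Real.exp_pos _).le]
        congr 1
        ring
    _ ≤ ENNReal.ofReal ((δ/4) / (N:ℝ)^2) := ENNReal.ofReal_le_ofReal hfinal
end

section
/- Let X be a set, H ≥ 1 an integer, F a class of functions from X to [0, H+1], T ≥ 1, δ ∈ (0,1), and set γ := 1/(8·√(4T/δ)). Let Z and Z̄ be finite multisets of elements of X with |Z̄| ≤ 4T/δ, and suppose that for all f, f' ∈ F: (1/2)·‖f − f'‖²_Z − 1/8 ≤ ‖f − f'‖²_{Z̄} ≤ (3/2)·‖f − f'‖²_Z + 1/2. Let f̄, f̂ ∈ F with sup_{x∈X}|f̄(x) − f̂(x)| ≤ γ, and let Ẑ be the multiset obtained from Z̄ by replacing each copy of z ∈ Z̄ by a point ẑ ∈ X satisfying |f(z) − f(ẑ)| ≤ γ for every f ∈ F. Then for every β ≥ 0, with F̂ := {f ∈ F : ‖f − f̂‖²_{Ẑ} ≤ 3β + 2}, one has {f ∈ F : ‖f − f̄‖²_Z ≤ β} ⊆ F̂ ⊆ {f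 ∈ F : ‖f − f̄‖²_Z ≤ 12(β + 1)}; consequently, for every x ∈ X, w({f ∈ F : ‖f − f̄‖²_Z ≤ β}, x) ≤ w(F̂, x) ≤ w({f ∈ F : ‖f − f̄‖²_Z ≤ 12(β + 1)}, x). -/
/-- The width of a set of functions `G` at a point `x`:
`w(G, x) = sup_{f, f' ∈ G} (f(x) − f'(x))`. -/
noncomputable def width {X : Type*} (G : Set (X → ℝ)) (x : X) : ℝ :=
  sSup {r : ℝ | ∃ f ∈ G, ∃ f' ∈ G, r = f x - f' x}

lemma key_sum {Y : Type*} (P : Multiset Y) (u v : Y → ℝ) (C : ℝ)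
    (h : ∀ p ∈ P, (u p - v p) ^ 2 ≤ C) :
    (P.map fun p => u p ^ 2).sum ≤ 2 * (P.map fun p => v p ^ 2).sum
      + 2 * (Multiset.card P : ℝ) * C := by
  induction P using Multiset.induction with
  | empty => simp
  | cons a s ih =>
    have ha := h a (Multiset.mem_cons_self a s)
    have hs := ih (fun p hp => h p (Multiset.mem_cons_of_mem hp))
    simp only [Multiset.map_cons, Multiset.sum_cons, Multiset.card_cons]
    push_cast
    nlinarith [sq_nonneg (u a - 2 * v a)]

lemma width_mono {X : Type*} (S T : Set (X → ℝ)) (x : X) (B : ℝ)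
    (hST : S ⊆ T) (hbd : ∀ r ∈ {r : ℝ | ∃ f ∈ T, ∃ f' ∈ T, r = f x - f' x}, r ≤ B) :
    width S x ≤ width T x := by
  have hbdd : BddAbove {r : ℝ | ∃ f ∈ T, ∃ f' ∈ T, r = f x - f' x} := ⟨B, hbd⟩
  rcases Set.eq_empty_or_nonempty {r : ℝ | ∃ f ∈ S, ∃ f' ∈ S, r = f x - f' x} with he | hne
  · rw [width, he, Real.sSup_empty]
    rcases Set.eq_empty_or_nonempty {r : ℝ | ∃ f ∈ T, ∃ f' ∈ T, r = f x - f' x} with he2 | hne2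
    · rw [width, he2, Real.sSup_empty]
    · obtain ⟨r, f, hf, f', hf', hr⟩ := hne2
      exact le_csSup hbdd ⟨f, hf, f, hf, by ring⟩
  · refine csSup_le_csSup hbdd hne ?_
    rintro r ⟨f, hf, f', hf', hr⟩
    exact ⟨f, hST hf, f', hST hf', hr⟩

/-- Proposition 2 of the paper, deterministic part: the rounded confidence
region `F̂ = {f ∈ F : ‖f − f̂‖²_Ẑ ≤ 3β + 2}` is sandwiched between the confidence regions of
radius `β` and `12(β+1)` defined with the original dataset `Z` and reference function `f̄`,
and consequently the same holds for the associated width (bonus) functions. -/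
theorem rounded_confidence_region_sandwich {X : Type*} (H : ℕ) (hH : 1 ≤ H)
    (F : Set (X → ℝ)) (hF : ∀ f ∈ F, ∀ x, f x ∈ Set.Icc (0 : ℝ) ((H : ℝ) + 1))
    (T : ℕ) (hT : 1 ≤ T) (δ : ℝ) (hδ : δ ∈ Set.Ioo (0 : ℝ) 1)
    (Z Zbar Zhat : Multiset X)
    (hcard : (Multiset.card Zbar : ℝ) ≤ 4 * (T : ℝ) / δ)
    (happrox : ∀ f ∈ F, ∀ f' ∈ F,
      (1 / 2) * msNormSq Z (fun x => f x - f' x) - 1 / 8 ≤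
          msNormSq Zbar (fun x => f x - f' x) ∧
        msNormSq Zbar (fun x => f x - f' x) ≤
          (3 / 2) * msNormSq Z (fun x => f x - f' x) + 1 / 2)
    (fbar fhat : X → ℝ) (hfbar : fbar ∈ F) (hfhat : fhat ∈ F)
    (hclose : ∀ x, |fbar x - fhat x| ≤ 1 / (8 * Real.sqrt (4 * (T : ℝ) / δ)))
    (pairs : Multiset (X × X))
    (hfst : pairs.map Prod.fst = Zbar) (hsnd : pairs.map Prod.snd = Zhat)
    (hround : ∀ q ∈ pairs, ∀ f ∈ F, |f q.1 - f q.2| ≤ 1 / (8 * Real.sqrt (4 * (T : ℝ) / δ))) :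
    ∀ β : ℝ, 0 ≤ β →
      ({f ∈ F | msNormSq Z (fun x => f x - fbar x) ≤ β} ⊆
          {f ∈ F | msNormSq Zhat (fun x => f x - fhat x) ≤ 3 * β + 2}) ∧
      ({f ∈ F | msNormSq Zhat (fun x => f x - fhat x) ≤ 3 * β + 2} ⊆
          {f ∈ F | msNormSq Z (fun x => f x - fbar x) ≤ 12 * (β + 1)}) ∧
      (∀ x : X,
        width {f ∈ F | msNormSq Z (fun x => f x - fbar x) ≤ β} x ≤
            width {f ∈ F | msNormSq Zhat (fun x => f x - fhat x) ≤ 3 * β + 2} x ∧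
          width {f ∈ F | msNormSq Zhat (fun x => f x - fhat x) ≤ 3 * β + 2} x ≤
            width {f ∈ F | msNormSq Z (fun x => f x - fbar x) ≤ 12 * (β + 1)} x) := by
  intro β hβ
  obtain ⟨hδ0, hδ1⟩ := hδ
  have hT1 : (1 : ℝ) ≤ T := by exact_mod_cast hT
  set c : ℝ := 4 * (T : ℝ) / δ with hc
  have hcpos : 0 < c := by rw [hc]; positivity
  have hsq : Real.sqrt c ^ 2 = c := Real.sq_sqrt hcpos.le
  have hsqpos : 0 < Real.sqrt c := Real.sqrt_pos.mpr hcpos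
  set γ : ℝ := 1 / (8 * Real.sqrt c) with hγ
  have hγpos : 0 < γ := by rw [hγ]; positivity
  have hγ2 : γ ^ 2 * c = 1 / 64 := by
    rw [hγ, div_pow, one_pow, mul_pow, hsq]
    field_simp
    ring
  -- number of points
  set n : ℝ := (Multiset.card pairs : ℝ) with hn
  have hnc : n ≤ c := by
    have : Multiset.card Zbar = Multiset.card pairs := by rw [← hfst, Multiset.card_map]
    rw [hn, ← this]; exact hcard
  have hn0 : 0 ≤ n := by rw [hn]; positivity
  have hnγ : 2 * n * (9 * γ ^ 2) ≤ 9 / 32 := by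
    have h1 : n * γ ^ 2 ≤ c * γ ^ 2 := by nlinarith [sq_nonneg γ]
    nlinarith
  -- rewriting the norms over pairs
  have hhat : ∀ g : X → ℝ, msNormSq Zhat g = (pairs.map fun p => g p.2 ^ 2).sum := by
    intro g
    rw [msNormSq, ← hsnd, Multiset.map_map]
    rfl
  have hbar : ∀ g : X → ℝ, msNormSq Zbar g = (pairs.map fun p => g p.1 ^ 2).sum := by
    intro g
    rw [msNormSq, ← hfst, Multiset.map_map]
    rfl
  -- pointwise bound
  have hpt : ∀ f ∈ F, ∀ p ∈ pairs,
      ((f p.2 - fhat p.2) - (f p.1 - fbar p.1)) ^ 2 ≤ 9 * γ ^ 2 := by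
    intro f hf p hp
    have h1 := abs_le.mp (hround p hp f hf)
    have h2 := abs_le.mp (hround p hp fhat hfhat)
    have h3 := abs_le.mp (hclose p.1)
    nlinarith [h1.1, h1.2, h2.1, h2.2, h3.1, h3.2]
  -- the two transfer inequalities between Zhat and Zbar
  have trans1 : ∀ f ∈ F,
      msNormSq Zhat (fun x => f x - fhat x) ≤
        2 * msNormSq Zbar (fun x => f x - fbar x) + 9 / 32 := by
    intro f hf
    rw [hhat, hbar]
    have := key_sum pairs (fun p => f p.2 - fhat p.2) (fun p => f p.1 - fbar p.1)
      (9 * γ ^ 2) (hpt f hf)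
    calc (pairs.map fun p => (f p.2 - fhat p.2) ^ 2).sum
        ≤ 2 * (pairs.map fun p => (f p.1 - fbar p.1) ^ 2).sum + 2 * n * (9 * γ ^ 2) := this
      _ ≤ 2 * (pairs.map fun p => (f p.1 - fbar p.1) ^ 2).sum + 9 / 32 := by linarith
  have trans2 : ∀ f ∈ F,
      msNormSq Zbar (fun x => f x - fbar x) ≤
        2 * msNormSq Zhat (fun x => f x - fhat x) + 9 / 32 := by
    intro f hf
    rw [hhat, hbar]
    have hpt' : ∀ p ∈ pairs,
        ((f p.1 - fbar p.1) - (f p.2 - fhat p.2)) ^ 2 ≤ 9 * γ ^ 2 := by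
      intro p hp
      have := hpt f hf p hp
      nlinarith [this]
    have := key_sum pairs (fun p => f p.1 - fbar p.1) (fun p => f p.2 - fhat p.2)
      (9 * γ ^ 2) hpt'
    calc (pairs.map fun p => (f p.1 - fbar p.1) ^ 2).sum
        ≤ 2 * (pairs.map fun p => (f p.2 - fhat p.2) ^ 2).sum + 2 * n * (9 * γ ^ 2) := this
      _ ≤ 2 * (pairs.map fun p => (f p.2 - fhat p.2) ^ 2).sum + 9 / 32 := by linarith
  -- set inclusions
  have incl1 : {f ∈ F | msNormSq Z (fun x => f x - fbar x) ≤ β} ⊆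
      {f ∈ F | msNormSq Zhat (fun x => f x - fhat x) ≤ 3 * β + 2} := by
    rintro f ⟨hf, hfβ⟩
    refine ⟨hf, ?_⟩
    have h1 := (happrox f hf fbar hfbar).2
    have h2 := trans1 f hf
    linarith
  have incl2 : {f ∈ F | msNormSq Zhat (fun x => f x - fhat x) ≤ 3 * β + 2} ⊆
      {f ∈ F | msNormSq Z (fun x => f x - fbar x) ≤ 12 * (β + 1)} := by
    rintro f ⟨hf, hfβ⟩
    refine ⟨hf, ?_⟩
    have h1 := (happrox f hf fbar hfbar).1
    have h2 := trans2 f hf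
    linarith
  refine ⟨incl1, incl2, fun x => ?_⟩
  have hbd : ∀ (G : Set (X → ℝ)), G ⊆ F →
      ∀ r ∈ {r : ℝ | ∃ f ∈ G, ∃ f' ∈ G, r = f x - f' x}, r ≤ (H : ℝ) + 1 := by
    rintro G hG r ⟨f, hf, f', hf', rfl⟩
    have h1 := (hF f (hG hf) x).2
    have h2 := (hF f' (hG hf') x).1
    linarith
  constructor
  · exact width_mono _ _ x ((H : ℝ) + 1) incl1 (hbd _ (fun f hf => hf.1))
  · exact width_mono _ _ x ((H : ℝ) + 1) incl2 (hbd _ (fun f hf => hf.1))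
end

section
/- Let S and A be finite nonempty sets, H ≥ 1 an integer, r : S×A → [0,1], and P(·|s,a) a probability distribution on S for each (s,a) ∈ S×A. Define the optimal value functions by V*_{H+1} ≡ 0 and, for h = H, …, 1, Q*_h(s,a) = r(s,a) + ∑_{s'∈S} P(s'|s,a)·V*_{h+1}(s') and V*_h(s) = max_{a∈A} Q*_h(s,a). Let f_h : S×A → ℝ and b_h : S×A → [0,∞) for h ∈ {1,…,H}, and define Q_{H+1} ≡ 0, Q_h(s,a) := min{f_h(s,a) + b_h(s,a), H}, and V_h(s) := max_{a∈A} Q_h(s,a). Suppose that for every h ∈ {1,…,H} and every (s,a) ∈ S×A, |r(s,a) + ∑_{s'∈S} P(s'|s,a)·V_{h+1}(s') − f_h(s,a)| ≤ b_h(s,a). Then for every h ∈ {1,…,H} and every (s,a) ∈ S×A: Q*_h(s,a) ≤ Q_h(s,a) ≤ r(s,a) + ∑_{s'∈S} P(s'|s,a)·V_{h+1}(s') + 2·b_h(s,a). -/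
open Finset

/-- Lemma on optimism, Lemma 8 of the paper: if the bonus dominates the error
of the estimate `f_h` of the one-step backup, then the truncated optimistic `Q`-functions
`Q_h = min{f_h + b_h, H}` satisfy `Q*_h ≤ Q_h ≤ Bellman backup of V_{h+1} + 2 b_h`. -/
theorem optimism_Q_bounds {S A : Type*} [Fintype S] [Fintype A] [Nonempty S] [Nonempty A]
    (H : ℕ) (hH : 1 ≤ H)
    (r : S → A → ℝ) (hr : ∀ s a, r s a ∈ Set.Icc (0 : ℝ) 1)
    (P : S → A → S → ℝ) (hP0 : ∀ s a s', 0 ≤ P s a s') (hP1 : ∀ s a, ∑ s', P s a s' = 1)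
    (Qstar : ℕ → S → A → ℝ) (Vstar : ℕ → S → ℝ)
    (hVstarTop : ∀ s, Vstar (H + 1) s = 0)
    (hQstar : ∀ h ∈ Finset.Icc 1 H, ∀ s a,
      Qstar h s a = r s a + ∑ s', P s a s' * Vstar (h + 1) s')
    (hVstar : ∀ h ∈ Finset.Icc 1 H, ∀ s,
      Vstar h s = univ.sup' univ_nonempty (fun a => Qstar h s a))
    (f b : ℕ → S → A → ℝ) (hb0 : ∀ h s a, 0 ≤ b h s a)
    (Q : ℕ → S → A → ℝ) (V : ℕ → S → ℝ)
    (hQTop : ∀ s a, Q (H + 1) s a = 0)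
    (hQ : ∀ h ∈ Finset.Icc 1 H, ∀ s a, Q h s a = min (f h s a + b h s a) (H : ℝ))
    (hV : ∀ h ∈ Finset.Icc 1 (H + 1), ∀ s,
      V h s = univ.sup' univ_nonempty (fun a => Q h s a))
    (hdom : ∀ h ∈ Finset.Icc 1 H, ∀ s a,
      |r s a + (∑ s', P s a s' * V (h + 1) s') - f h s a| ≤ b h s a) :
    ∀ h ∈ Finset.Icc 1 H, ∀ s a,
      Qstar h s a ≤ Q h s a ∧
      Q h s a ≤ r s a + (∑ s', P s a s' * V (h + 1) s') + 2 * b h s a := by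

  -- Key downward induction: Vstar h ≤ V h and Vstar h ≤ H + 1 - h
  have key : ∀ n h, 1 ≤ h → h + n = H + 1 → ∀ s,
      Vstar h s ≤ V h s ∧ Vstar h s ≤ (H : ℝ) + 1 - h := by
    intro n
    induction n with
    | zero =>
      intro h h1 he s
      have hh : h = H + 1 := by omega
      subst hh
      have hVtop : V (H + 1) s = 0 := by
        rw [hV (H + 1) (by simp [Finset.mem_Icc]) s]
        apply le_antisymm
        · apply Finset.sup'_le
          intro a _
          rw [hQTop s a]
        · have a0 : (Classical.arbitrary A) ∈ (univ : Finset A) := mem_univ _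
          calc (0 : ℝ) = Q (H + 1) s (Classical.arbitrary A) := (hQTop s _).symm
            _ ≤ _ := Finset.le_sup' _ a0
      rw [hVstarTop s, hVtop]
      constructor
      · exact le_refl 0
      · push_cast
        linarith
    | succ n ih =>
      intro h h1 he s
      have hle : h ≤ H := by omega
      have hmem : h ∈ Finset.Icc 1 H := Finset.mem_Icc.mpr ⟨h1, hle⟩
      have hmem' : h ∈ Finset.Icc 1 (H + 1) := Finset.mem_Icc.mpr ⟨h1, by omega⟩
      have ihs := ih (h + 1) (by omega) (by omega)
      have hQb : ∀ a, Qstar h s a ≤ Q h s a ∧ Qstar h s a ≤ (H : ℝ) + 1 - h := by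
        intro a
        have hsum1 : ∑ s', P s a s' * Vstar (h + 1) s' ≤ ∑ s', P s a s' * V (h + 1) s' :=
          Finset.sum_le_sum fun s' _ => mul_le_mul_of_nonneg_left ((ihs s').1) (hP0 s a s')
        have hcast : ((H : ℝ) + 1 - ((h + 1 : ℕ) : ℝ)) = (H : ℝ) - h := by push_cast; ring
        have hsum2 : ∑ s', P s a s' * Vstar (h + 1) s' ≤ ∑ s', P s a s' * ((H : ℝ) - h) := by
          apply Finset.sum_le_sum
          intro s' _
          apply mul_le_mul_of_nonneg_left _ (hP0 s a s')
          rw [← hcast]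
          exact (ihs s').2
        have hconst : ∑ s', P s a s' * ((H : ℝ) - h) = (H : ℝ) - h := by
          rw [← Finset.sum_mul, hP1]; ring
        rw [hconst] at hsum2
        have hQs := hQstar h hmem s a
        have hd := abs_le.mp (hdom h hmem s a)
        have hQh := hQ h hmem s a
        have hr' := hr s a
        rw [Set.mem_Icc] at hr'
        have hh1 : (1 : ℝ) ≤ (h : ℝ) := by exact_mod_cast h1
        have hQub : Qstar h s a ≤ (H : ℝ) + 1 - h := by
          rw [hQs]; linarith [hr'.2]
        refine ⟨?_, hQub⟩
        rw [hQh]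
        apply le_min
        · rw [hQs]
          linarith [hd.1]
        · linarith
      constructor
      · rw [hVstar h hmem s, hV h hmem' s]
        apply Finset.sup'_le
        intro a _
        exact le_trans (hQb a).1 (Finset.le_sup' _ (mem_univ a))
      · rw [hVstar h hmem s]
        apply Finset.sup'_le
        intro a _
        exact (hQb a).2
  intro h hmem s a
  have hm := Finset.mem_Icc.mp hmem
  have ihs := key (H - h) (h + 1) (by omega) (by omega)
  have hQh := hQ h hmem s a
  have hd := abs_le.mp (hdom h hmem s a)
  have hQs := hQstar h hmem s a
  have hb := hb0 h s a
  constructor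
  · have hsum1 : ∑ s', P s a s' * Vstar (h + 1) s' ≤ ∑ s', P s a s' * V (h + 1) s' :=
      Finset.sum_le_sum fun s' _ => mul_le_mul_of_nonneg_left ((ihs s').1) (hP0 s a s')
    have hcast : ((H : ℝ) + 1 - ((h + 1 : ℕ) : ℝ)) = (H : ℝ) - h := by push_cast; ring
    have hsum2 : ∑ s', P s a s' * Vstar (h + 1) s' ≤ ∑ s', P s a s' * ((H : ℝ) - h) := by
      apply Finset.sum_le_sum
      intro s' _
      apply mul_le_mul_of_nonneg_left _ (hP0 s a s')
      rw [← hcast]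
      exact (ihs s').2
    have hconst : ∑ s', P s a s' * ((H : ℝ) - h) = (H : ℝ) - h := by
      rw [← Finset.sum_mul, hP1]; ring
    rw [hconst] at hsum2
    have hr' := hr s a
    rw [Set.mem_Icc] at hr'
    have hh1 : (1 : ℝ) ≤ (h : ℝ) := by exact_mod_cast hm.1
    rw [hQh]
    apply le_min
    · rw [hQs]; linarith [hd.1]
    · rw [hQs]; linarith [hr'.2]
  · rw [hQh]
    calc min (f h s a + b h s a) (H : ℝ) ≤ f h s a + b h s a := min_le_left _ _
      _ ≤ _ := by linarith [hd.2]
end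

section
/- Let S and A be finite nonempty sets, H ≥ 1 an integer, r : S×A → [0,1], and P(·|s,a) a probability distribution on S for each (s,a). Let b_h : S×A → [0,∞) and Q_h : S×A → ℝ for h ∈ {1,…,H}, define Q_{H+1} ≡ 0 and V_h(s) := max_{a∈A} Q_h(s,a) (so V_{H+1} ≡ 0), and suppose that for all h ∈ {1,…,H} and all (s,a): Q_h(s,a) ≤ r(s,a) + ∑_{s'∈S} P(s'|s,a)·V_{h+1}(s') + 2·b_h(s,a). Let π = (π_h)_{h=1}^H be a policy with π_h(s) ∈ argmax_{a∈A} Q_h(s,a) for every s, and define V^π by V^π_{H+1} ≡ 0 and V^π_h(s) = r(s,π_h(s)) + ∑_{s'∈S} P(s'|s,π_h(s))·V^π_{h+1}(s'). Then for any sequence of states s_1, …, s_{H+1} ∈ S, with a_h := π_h(s_h), one has V_1(s_1) − V^π_1(s_1) ≤ ∑_{h=1}^{H−1} ξ_h + 2·∑_{h=1}^{H} b_h(s_h, a_h), where ξ_h := ∑_{s'∈S} P(s'|s_h,a_h)·(V_{h+1}(s') − V^π_{h+1}(s')) − (V_{h+1}(s_{h+1}) − V^π_{h+1}(s_{h+1})).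 -/
open Finset

/-- regret decomposition, Lemma 9 of the paper: for the greedy policy `π`
with respect to optimistic `Q`-functions, along any state sequence `s_1, …, s_{H+1}`,
`V_1(s_1) − V^π_1(s_1)` is at most the sum of the martingale terms `ξ_h` plus twice the sum
of the bonuses along the trajectory. -/
theorem regret_decomposition {S A : Type*} [Fintype S] [Fintype A] [Nonempty S] [Nonempty A]
    (H : ℕ) (hH : 1 ≤ H)
    (r : S → A → ℝ) (hr : ∀ s a, r s a ∈ Set.Icc (0 : ℝ) 1)
    (P : S → A → S → ℝ) (hP0 : ∀ s a s', 0 ≤ P s a s') (hP1 : ∀ s a, ∑ s', P s a s' = 1)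
    (b : ℕ → S → A → ℝ) (hb0 : ∀ h s a, 0 ≤ b h s a)
    (Q : ℕ → S → A → ℝ) (hQTop : ∀ s a, Q (H + 1) s a = 0)
    (V : ℕ → S → ℝ)
    (hV : ∀ h ∈ Finset.Icc 1 (H + 1), ∀ s,
      V h s = univ.sup' univ_nonempty (fun a => Q h s a))
    (hub : ∀ h ∈ Finset.Icc 1 H, ∀ s a,
      Q h s a ≤ r s a + (∑ s', P s a s' * V (h + 1) s') + 2 * b h s a)
    (π : ℕ → S → A)
    (hπ : ∀ h ∈ Finset.Icc 1 H, ∀ s, ∀ a, Q h s a ≤ Q h s (π h s))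
    (Vπ : ℕ → S → ℝ) (hVπTop : ∀ s, Vπ (H + 1) s = 0)
    (hVπ : ∀ h ∈ Finset.Icc 1 H, ∀ s,
      Vπ h s = r s (π h s) + ∑ s', P s (π h s) s' * Vπ (h + 1) s')
    (st : ℕ → S) :
    V 1 (st 1) - Vπ 1 (st 1) ≤
      (∑ h ∈ Finset.Icc 1 (H - 1),
        ((∑ s', P (st h) (π h (st h)) s' * (V (h + 1) s' - Vπ (h + 1) s')) -
          (V (h + 1) (st (h + 1)) - Vπ (h + 1) (st (h + 1))))) +
      2 * ∑ h ∈ Finset.Icc 1 H, b h (st h) (π h (st h)) := by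

  -- abbreviations
  set ξ : ℕ → ℝ := fun h =>
    (∑ s', P (st h) (π h (st h)) s' * (V (h + 1) s' - Vπ (h + 1) s')) -
      (V (h + 1) (st (h + 1)) - Vπ (h + 1) (st (h + 1))) with hξ
  have hVtop : ∀ s, V (H + 1) s = 0 := by
    intro s
    rw [hV (H + 1) (Finset.mem_Icc.mpr ⟨by omega, le_rfl⟩) s]
    apply le_antisymm
    · exact Finset.sup'_le _ _ fun a _ => le_of_eq (hQTop s a)
    · exact le_trans (le_of_eq (hQTop s (Classical.arbitrary A)).symm)
        (Finset.le_sup' _ (Finset.mem_univ _))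
  -- main induction
  have key : ∀ n : ℕ, ∀ h : ℕ, h + n = H + 1 → 1 ≤ h →
      V h (st h) - Vπ h (st h) ≤
        (∑ j ∈ Finset.Icc h H, ξ j) + 2 * ∑ j ∈ Finset.Icc h H, b j (st j) (π j (st j)) := by
    intro n
    induction n with
    | zero =>
      intro h hhn _
      have : h = H + 1 := by omega
      subst this
      rw [hVtop, hVπTop]
      have he : Finset.Icc (H + 1) H = ∅ := by
        apply Finset.Icc_eq_empty; omega
      simp [he]
    | succ n ih =>
      intro h hhn h1
      have hhH : h ≤ H := by omega
      have hmem : h ∈ Finset.Icc 1 H := Finset.mem_Icc.mpr ⟨h1, hhH⟩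
      set a := π h (st h) with ha
      have hVle : V h (st h) ≤ Q h (st h) a := by
        rw [hV h (Finset.mem_Icc.mpr ⟨h1, by omega⟩) (st h)]
        exact Finset.sup'_le _ _ fun a' _ => hπ h hmem (st h) a'
      have hQle := hub h hmem (st h) a
      have hVπeq := hVπ h hmem (st h)
      have step : V h (st h) - Vπ h (st h) ≤
          (∑ s', P (st h) a s' * (V (h + 1) s' - Vπ (h + 1) s')) + 2 * b h (st h) a := by
        rw [hVπeq]
        have : ∑ s', P (st h) a s' * (V (h + 1) s' - Vπ (h + 1) s') =
            (∑ s', P (st h) a s' * V (h + 1) s') - ∑ s', P (st h) a s' * Vπ (h + 1) s' := by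
          rw [← Finset.sum_sub_distrib]; congr 1; ext s'; ring
        rw [this]
        have := hVle.trans hQle
        linarith
      have ihh := ih (h + 1) (by omega) (by omega)
      have hsplitξ : ∑ j ∈ Finset.Icc h H, ξ j = ξ h + ∑ j ∈ Finset.Icc (h + 1) H, ξ j := by
        rw [Finset.Icc_eq_cons_Ioc hhH, Finset.sum_cons, Finset.Icc_add_one_left_eq_Ioc]
      have hsplitb : ∑ j ∈ Finset.Icc h H, b j (st j) (π j (st j)) =
          b h (st h) a + ∑ j ∈ Finset.Icc (h + 1) H, b j (st j) (π j (st j)) := by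
        rw [Finset.Icc_eq_cons_Ioc hhH, Finset.sum_cons, Finset.Icc_add_one_left_eq_Ioc]
      rw [hsplitξ, hsplitb]
      have hξh : ξ h = (∑ s', P (st h) a s' * (V (h + 1) s' - Vπ (h + 1) s')) -
          (V (h + 1) (st (h + 1)) - Vπ (h + 1) (st (h + 1))) := rfl
      linarith
  have main := key H 1 (by omega) le_rfl
  have hξH : ξ H = 0 := by
    have : ∀ s', V (H + 1) s' - Vπ (H + 1) s' = 0 := by
      intro s'; rw [hVtop, hVπTop]; ring
    simp [hξ, this]
  have hsum : ∑ j ∈ Finset.Icc 1 H, ξ j = (∑ j ∈ Finset.Icc 1 (H - 1), ξ j) + ξ H := by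
    have hH' : H - 1 + 1 = H := by omega
    rw [← hH', Finset.sum_Icc_succ_top (by omega)]
    norm_num
  calc V 1 (st 1) - Vπ 1 (st 1) ≤ _ := main
    _ = _ := by rw [hsum, hξH]; ring
end

section
/- Let X be a set, H ≥ 1 and K ≥ 1 integers, F a class of functions from X to [0, H+1], β ≥ 0, and ε > 0 with d := dim_E(F, ε) satisfying 1 ≤ d < ∞. Let z^k_h ∈ X for (k,h) ∈ [K]×[H], and for each k ∈ [K] let Z^k denote the multiset {z^τ_{h'} : τ ∈ [k−1], h' ∈ [H]}. Suppose that for each (k,h) ∈ [K]×[H] there are f^k_h ∈ F and a function b^k_h : X → ℝ such that b^k_h(x) ≤ w({f ∈ F : ‖f − f^k_h‖²_{Z^k} ≤ 9β + 12}, x) for every x ∈ X. Then the number of pairs (k,h) ∈ [K]×[H] with b^k_h(z^k_h) > ε is at most ((36β + 48)/ε² + H) · d. -/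
lemma attach_filter_map {α β : Type*} (s : Finset α) (p : α → Prop) [DecidablePred p]
    (f : α → β) :
    ((s.attach.filter (fun m => p m.1)).val.map (fun m => f m.1)) = (s.filter p).val.map f := by
  rw [Finset.filter_attach, Finset.map_val, Multiset.map_map]
  have : ((s.filter p).attach.val.map (fun m => f m.1)) = (s.filter p).val.map f := by
    rw [Finset.attach_val]
    exact Multiset.attach_map_val' _ _
  rw [← this]
  rfl

open Classical in
/-- contents of bucket `j` before time `i`, given assignment `a`. -/
noncomputable def cont {X : Type*} (pts : ℕ → X) (a : ℕ → ℕ) (i j : ℕ) : Multiset X :=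
  (((Finset.range i).filter (fun m => a m = j)).val.map pts)

open Classical in
/-- greedy bucket assignment -/
noncomputable def bk {X : Type*} (F : Set (X → ℝ)) (ε : ℝ) (pts : ℕ → X) : ℕ → ℕ
  | i => sInf {j | ¬ EpsDep F ε (((Finset.range i).attach.filter
      (fun m => bk F ε pts m.1 = j)).val.map (fun m => pts m.1)) (pts i)}
decreasing_by
  all_goals exact Finset.mem_range.mp (Subtype.prop _)

theorem bk_eq {X : Type*} (F : Set (X → ℝ)) (ε : ℝ) (pts : ℕ → X) (i : ℕ) :
    bk F ε pts i = sInf {j | ¬ EpsDep F ε (cont pts (bk F ε pts) i j) (pts i)} := by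
  classical
  rw [bk]
  congr 1
  ext j
  rw [Set.mem_setOf_eq, Set.mem_setOf_eq, attach_filter_map (Finset.range i)
    (fun m => bk F ε pts m = j) pts]
  rfl

set_option maxHeartbeats 2000000 in
/-- Lemma 10 of the paper: if each bonus `b^k_h` is dominated by the width of
the confidence region `{f ∈ F : ‖f − f^k_h‖²_{Z^k} ≤ 9β + 12}`, then the number of indices
`(k,h)` whose bonus at the visited point exceeds `ε` is at most `((36β + 48)/ε² + H)·d`,
where `d = dim_E(F, ε)`. -/
theorem count_large_bonus {X : Type*} (H K : ℕ) (hH : 1 ≤ H) (hK : 1 ≤ K)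
    (F : Set (X → ℝ)) (hF : ∀ f ∈ F, ∀ x, f x ∈ Set.Icc (0 : ℝ) ((H : ℝ) + 1))
    (β : ℝ) (hβ : 0 ≤ β) (ε : ℝ) (hε : 0 < ε)
    (d : ℕ) (hd1 : 1 ≤ d) (hd : IsGreatest {n : ℕ | EluderLen F ε n} d)
    (z : ℕ → ℕ → X)
    (fk : ℕ → ℕ → (X → ℝ)) (hfk : ∀ k ∈ Finset.Icc 1 K, ∀ h ∈ Finset.Icc 1 H, fk k h ∈ F)
    (b : ℕ → ℕ → X → ℝ)
    (hb : ∀ k ∈ Finset.Icc 1 K, ∀ h ∈ Finset.Icc 1 H, ∀ x : X,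
      b k h x ≤ width {f ∈ F |
        msNormSq (((Finset.Icc 1 (k - 1) ×ˢ Finset.Icc 1 H).val).map
            (fun q : ℕ × ℕ => z q.1 q.2)) (fun x => f x - fk k h x) ≤ 9 * β + 12} x) :
    ({q : ℕ × ℕ | q.1 ∈ Finset.Icc 1 K ∧ q.2 ∈ Finset.Icc 1 H ∧
        ε < b q.1 q.2 (z q.1 q.2)}.ncard : ℝ) ≤
      ((36 * β + 48) / ε ^ 2 + H) * d := by
  classical
  -- the finite set of "large bonus" indices
  set Sf : Finset (ℕ×ℕ) :=
    (Finset.Icc 1 K ×ˢ Finset.Icc 1 H).filter (fun q => ε < b q.1 q.2 (z q.1 q.2)) with hSf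
  have hset : {q : ℕ × ℕ | q.1 ∈ Finset.Icc 1 K ∧ q.2 ∈ Finset.Icc 1 H ∧
      ε < b q.1 q.2 (z q.1 q.2)} = ↑Sf := by
    ext q
    simp only [hSf, Set.mem_setOf_eq, Finset.coe_filter, Finset.mem_product]
    tauto
  rw [hset, Set.ncard_coe_finset]
  set N := Sf.card with hN
  -- encoding into ℕ respecting lexicographic order
  set e : ℕ×ℕ → ℕ := fun q => (H+1) * q.1 + q.2 with he
  have hkey : ∀ a c a' c' : ℕ, c ≤ H → (H+1)*a'+c' < (H+1)*a+c →
      a' < a ∨ (a' = a ∧ c' < c) := by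
    intro a c a' c' hc hlt
    rcases Nat.lt_trichotomy a' a with h|h|h
    · exact Or.inl h
    · exact Or.inr ⟨h, by subst h; exact Nat.lt_of_add_lt_add_left hlt⟩
    · exfalso
      have h1 : (H+1)*a + c < (H+1)*(a+1) := by
        rw [Nat.mul_add, Nat.mul_one]
        omega
      have h2 : (H+1)*(a+1) ≤ (H+1)*a' := Nat.mul_le_mul_left _ h
      omega
  have hmemSf : ∀ q ∈ Sf, 1 ≤ q.1 ∧ q.1 ≤ K ∧ 1 ≤ q.2 ∧ q.2 ≤ H ∧ ε < b q.1 q.2 (z q.1 q.2) := by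
    intro q hq
    rw [hSf, Finset.mem_filter, Finset.mem_product, Finset.mem_Icc, Finset.mem_Icc] at hq
    tauto
  have hdec : ∀ q ∈ Sf, (e q / (H+1), e q % (H+1)) = q := by
    intro q hq
    obtain ⟨h1, h2, h3, h4, -⟩ := hmemSf q hq
    have hlt : q.2 < H + 1 := by omega
    have hdiv : e q / (H+1) = q.1 := by
      rw [he]
      simp only
      rw [Nat.mul_add_div (by omega), Nat.div_eq_of_lt hlt]
      omega
    have hmod : e q % (H+1) = q.2 := by
      rw [he]
      simp only
      rw [Nat.mul_add_mod, Nat.mod_eq_of_lt hlt]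
    rw [hdiv, hmod]
  have heinj : ∀ q ∈ Sf, ∀ q' ∈ Sf, e q = e q' → q = q' := by
    intro q hq q' hq' hee
    rw [← hdec q hq, ← hdec q' hq', hee]
  set S' : Finset ℕ := Sf.image e with hS'
  have hcard : S'.card = N := by
    rw [hS', hN]
    exact Finset.card_image_of_injOn heinj
  set iso := S'.orderIsoOfFin hcard with hiso
  set elem : ℕ → ℕ×ℕ := fun i =>
    if hi : i < N then ((iso ⟨i, hi⟩ : ℕ) / (H+1), (iso ⟨i, hi⟩ : ℕ) % (H+1)) else (0,0)
    with helem
  set pts : ℕ → X := fun i => z (elem i).1 (elem i).2 with hpts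
  have hElem : ∀ i (hi : i < N), elem i ∈ Sf ∧ e (elem i) = (iso ⟨i, hi⟩ : ℕ) := by
    intro i hi
    have hmem : ((iso ⟨i, hi⟩ : ℕ)) ∈ Finset.image e Sf := by
      rw [← hS']; exact (iso ⟨i, hi⟩).2
    rw [Finset.mem_image] at hmem
    obtain ⟨q, hq, hqe⟩ := hmem
    have helemi : elem i = q := by
      rw [helem]
      simp only [dif_pos hi]
      rw [← hqe]
      exact hdec q hq
    rw [helemi, hqe]
    exact ⟨hq, rfl⟩
  have hElemLt : ∀ i' i, i' < i → i < N → e (elem i') < e (elem i) := by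
    intro i' i hlt hi
    have hi' : i' < N := hlt.trans hi
    rw [(hElem i' hi').2, (hElem i hi).2]
    have : (⟨i', hi'⟩ : Fin N) < ⟨i, hi⟩ := hlt
    have h2 := iso.strictMono this
    exact_mod_cast h2
  -- basic bounds on elem coordinates
  have hElemK : ∀ i, i < N → 1 ≤ (elem i).1 ∧ (elem i).1 ≤ K ∧ 1 ≤ (elem i).2 ∧ (elem i).2 ≤ H := by
    intro i hi
    have := hmemSf _ ((hElem i hi).1)
    tauto
  have hElemOrd : ∀ i' i, i' < i → i < N →
      (elem i').1 < (elem i).1 ∨ ((elem i').1 = (elem i).1 ∧ (elem i').2 < (elem i).2) := by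
    intro i' i hlt hi
    have h1 := hElemLt i' i hlt hi
    rw [he] at h1
    exact hkey _ _ _ _ (hElemK i hi).2.2.2 h1
  have hElemInj : ∀ i' i, i' < N → i < N → elem i' = elem i → i' = i := by
    intro i' i hi' hi heq
    rcases Nat.lt_trichotomy i' i with h|h|h
    · exact absurd (hElemLt i' i h hi) (by rw [heq]; exact lt_irrefl _)
    · exact h
    · exact absurd (hElemLt i i' h hi') (by rw [heq]; exact lt_irrefl _)
  -- witness pairs from the width hypothesis
  set L9 : ℝ := 9 * β + 12 with hL9
  have hwit : ∀ i, i < N → ∃ f ∈ F, ∃ f' ∈ F,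
      msNormSq ((((Finset.Icc 1 ((elem i).1 - 1) ×ˢ Finset.Icc 1 H)).val).map
        (fun q : ℕ × ℕ => z q.1 q.2)) (fun x => f x - fk (elem i).1 (elem i).2 x) ≤ L9 ∧
      msNormSq ((((Finset.Icc 1 ((elem i).1 - 1) ×ˢ Finset.Icc 1 H)).val).map
        (fun q : ℕ × ℕ => z q.1 q.2)) (fun x => f' x - fk (elem i).1 (elem i).2 x) ≤ L9 ∧
      ε < f (pts i) - f' (pts i) := by
    intro i hi
    obtain ⟨hk1, hk2, hh1, hh2⟩ := hElemK i hi
    set k := (elem i).1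
    set h := (elem i).2
    have hkI : k ∈ Finset.Icc 1 K := Finset.mem_Icc.mpr ⟨hk1, hk2⟩
    have hhI : h ∈ Finset.Icc 1 H := Finset.mem_Icc.mpr ⟨hh1, hh2⟩
    have hbw := hb k hkI h hhI (z k h)
    have hεb : ε < b k h (z k h) := (hmemSf _ ((hElem i hi).1)).2.2.2.2
    set G : Set (X → ℝ) := {f ∈ F |
        msNormSq (((Finset.Icc 1 (k - 1) ×ˢ Finset.Icc 1 H).val).map
            (fun q : ℕ × ℕ => z q.1 q.2)) (fun x => f x - fk k h x) ≤ 9 * β + 12} with hG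
    set R : Set ℝ := {r : ℝ | ∃ f ∈ G, ∃ f' ∈ G, r = f (z k h) - f' (z k h)} with hR
    have hwid : ε < sSup R := lt_of_lt_of_le hεb hbw
    have hex : ∃ r ∈ R, ε < r := by
      by_contra hcon
      push_neg at hcon
      have : sSup R ≤ ε := Real.sSup_le hcon hε.le
      linarith
    obtain ⟨r, hr, hεr⟩ := hex
    rw [hR] at hr
    obtain ⟨f, hfG, f', hf'G, hrr⟩ := hr
    rw [hG] at hfG hf'G
    refine ⟨f, hfG.1, f', hf'G.1, hfG.2, hf'G.2, ?_⟩
    have hpz : pts i = z k h := rfl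
    rw [hpz, ← hrr]
    exact hεr
  -- bucket machinery
  set A : ℕ → ℕ := bk F ε pts with hA
  set ct : ℕ → ℕ → Multiset X := cont pts A with hct
  have hI0 : ∀ i, i < N → ¬ EpsDep F ε 0 (pts i) := by
    intro i hi hdep
    obtain ⟨f, hf, f', hf', -, -, hw⟩ := hwit i hi
    have h0 : msNorm (0 : Multiset X) (fun x => f x - f' x) ≤ ε := by
      simp [msNorm, msNormSq, hε.le]
    have := hdep f hf f' hf' h0
    have h2 : f (pts i) - f' (pts i) ≤ |f (pts i) - f' (pts i)| := le_abs_self _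
    linarith
  have hct0 : ∀ i, (∀ m, m < i → A m ≠ i) → ct i i = 0 := by
    intro i hne
    rw [hct]
    unfold cont
    have : (Finset.range i).filter (fun m => bk F ε pts m = i) = ∅ := by
      apply Finset.filter_eq_empty_iff.mpr
      intro m hm
      exact hne m (Finset.mem_range.mp hm)
    rw [this]
    simp
  have hI1 : ∀ i, i < N → A i ≤ i := by
    intro i
    induction i using Nat.strong_induction_on with
    | _ i IH =>
      intro hi
      have h0 : ct i i = 0 := hct0 i (fun m hm => by
        have := IH m hm (hm.trans hi)
        omega)
      rw [hA, bk_eq]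
      apply Nat.sInf_le
      show ¬ EpsDep F ε (cont pts (bk F ε pts) i i) (pts i)
      have : cont pts (bk F ε pts) i i = ct i i := rfl
      rw [this, h0]
      exact hI0 i hi
  have hne : ∀ i, i < N → {j | ¬ EpsDep F ε (ct i j) (pts i)}.Nonempty := by
    intro i hi
    refine ⟨i, ?_⟩
    have h0 : ct i i = 0 := hct0 i (fun m hm => by
      have := hI1 m (hm.trans hi)
      omega)
    show ¬ EpsDep F ε (ct i i) (pts i)
    rw [h0]
    exact hI0 i hi
  have hI2 : ∀ i, i < N → ¬ EpsDep F ε (ct i (A i)) (pts i) := by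
    intro i hi
    have hAi : A i = sInf {j | ¬ EpsDep F ε (ct i j) (pts i)} := by
      rw [hA, bk_eq]
    have := Nat.sInf_mem (hne i hi)
    rw [← hAi] at this
    exact this
  have hI3 : ∀ i, i < N → ∀ j, j < A i → EpsDep F ε (ct i j) (pts i) := by
    intro i hi j hj
    have hAi : A i = sInf {j | ¬ EpsDep F ε (ct i j) (pts i)} := by
      rw [hA, bk_eq]
    rw [hAi] at hj
    have := Nat.notMem_of_lt_sInf hj
    simpa using this
  -- fiber decomposition
  set B : Finset ℕ := (Finset.range N).image A with hB
  have hfib : N = ∑ j ∈ B, ((Finset.range N).filter (fun m => A m = j)).card := by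
    have := Finset.card_eq_sum_card_fiberwise
      (f := A) (s := Finset.range N) (t := B)
      (fun x hx => by rw [hB]; exact Finset.mem_image_of_mem A hx)
    rw [Finset.card_range] at this
    exact this
  have hfibd : ∀ j, ((Finset.range N).filter (fun m => A m = j)).card ≤ d := by
    intro j
    set T : Finset ℕ := (Finset.range N).filter (fun m => A m = j) with hT
    set n := T.card with hn
    set iso2 := T.orderIsoOfFin rfl with hiso2
    have hmemT : ∀ s : Fin n, (iso2 s : ℕ) ∈ T := fun s => (iso2 s).2
    have hTN : ∀ m ∈ T, m < N ∧ A m = j := by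
      intro m hm
      rw [hT, Finset.mem_filter, Finset.mem_range] at hm
      exact hm
    set l : Fin n → X := fun s => pts (iso2 s) with hl
    have hemb : Function.Injective (fun s : Fin n => (iso2 s : ℕ)) := by
      intro s s' hss
      exact iso2.injective (Subtype.ext hss)
    have hkey2 : ∀ t : Fin n,
        ((Finset.univ.filter (fun s => s < t)).val.map l) = ct (iso2 t) j := by
      intro t
      have hfeq : (Finset.range (iso2 t)).filter (fun m => A m = j) =
          (Finset.univ.filter (fun s : Fin n => s < t)).map ⟨_, hemb⟩ := by
        ext m
        rw [Finset.mem_filter, Finset.mem_range, Finset.mem_map]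
        constructor
        · rintro ⟨hmlt, hAm⟩
          have hmT : m ∈ T := by
            rw [hT, Finset.mem_filter, Finset.mem_range]
            exact ⟨hmlt.trans (hTN _ (hmemT t)).1, hAm⟩
          refine ⟨iso2.symm ⟨m, hmT⟩, ?_, ?_⟩
          · rw [Finset.mem_filter]
            refine ⟨Finset.mem_univ _, ?_⟩
            have : iso2 (iso2.symm ⟨m, hmT⟩) < iso2 t := by
              rw [iso2.apply_symm_apply]
              exact Subtype.mk_lt_mk.mpr hmlt
            exact iso2.lt_iff_lt.mp this
          · show ((iso2 (iso2.symm ⟨m, hmT⟩) : ℕ)) = m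
            rw [iso2.apply_symm_apply]
        · rintro ⟨s, hs, hsm⟩
          rw [Finset.mem_filter] at hs
          have hlt : iso2 s < iso2 t := iso2.lt_iff_lt.mpr hs.2
          have hlt' : (iso2 s : ℕ) < (iso2 t : ℕ) := hlt
          constructor
          · show m < (iso2 t : ℕ)
            rw [← hsm] at *
            exact hlt'
          · rw [← hsm]
            exact (hTN _ (hmemT s)).2
      rw [hct]
      unfold cont
      have : ((Finset.range (iso2 t)).filter (fun m => bk F ε pts m = j)) =
          (Finset.range (iso2 t)).filter (fun m => A m = j) := rfl
      rw [this, hfeq, Finset.map_val, Multiset.map_map]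
      rfl
    have hEL : EluderLen F ε n := by
      refine ⟨ε, le_rfl, l, fun t => ?_⟩
      rw [hkey2 t]
      have hiN := (hTN _ (hmemT t)).1
      have hAj := (hTN _ (hmemT t)).2
      have := hI2 (iso2 t) hiN
      rw [hAj] at this
      exact this
    exact hd.2 hEL
  have hNBd : (N : ℝ) ≤ (B.card : ℝ) * d := by
    have h1 : N ≤ B.card * d := by
      rw [hfib]
      calc ∑ j ∈ B, ((Finset.range N).filter (fun m => A m = j)).card
          ≤ ∑ _j ∈ B, d := Finset.sum_le_sum (fun j _ => hfibd j)
        _ = B.card * d := by rw [Finset.sum_const, smul_eq_mul]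
    exact_mod_cast h1
  -- bound on the number of buckets
  have hBcard : (B.card : ℝ) ≤ (36 * β + 48) / ε ^ 2 + H := by
    have hLpos : (0:ℝ) ≤ (36 * β + 48) / ε ^ 2 := by positivity
    by_cases hN0 : N = 0
    · have hBe : B = ∅ := by rw [hB, hN0]; simp
      rw [hBe]
      simp only [Finset.card_empty, Nat.cast_zero]
      have : (0:ℝ) ≤ (H:ℝ) := Nat.cast_nonneg H
      linarith
    · have hNpos : 0 < N := Nat.pos_of_ne_zero hN0
      have hBne : B.Nonempty :=
        ⟨A 0, by rw [hB]; exact Finset.mem_image_of_mem A (Finset.mem_range.mpr hNpos)⟩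
      set js := B.max' hBne with hjs
      have hjsB : js ∈ B := B.max'_mem hBne
      have hjsB' : ∃ i ∈ Finset.range N, A i = js := by
        rw [hB, Finset.mem_image] at hjsB
        exact hjsB
      obtain ⟨istar, histar', hAistar⟩ := hjsB'
      have histar : istar < N := Finset.mem_range.mp histar'
      obtain ⟨f, hf, f', hf', hw1, hw2, hw3⟩ := hwit istar histar
      obtain ⟨hk1, hk2, hh1, hh2⟩ := hElemK istar histar
      set k := (elem istar).1 with hk
      set h := (elem istar).2 with hh
      set Zk : Multiset X :=
        ((Finset.Icc 1 (k-1) ×ˢ Finset.Icc 1 H).val).map (fun q : ℕ×ℕ => z q.1 q.2) with hZk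
      set g : X → ℝ := fun x => f x - f' x with hg
      -- the squared distance of the witness pair over past data is small
      have hgZ : msNormSq Zk g ≤ 36*β + 48 := by
        have hpt : ∀ x ∈ Zk, g x ^ 2 ≤
            2*(f x - fk k h x)^2 + 2*(f' x - fk k h x)^2 := by
          intro x _
          simp only [hg]
          nlinarith [sq_nonneg ((f x - fk k h x) + (f' x - fk k h x)),
            sq_nonneg ((f x - fk k h x) - (f' x - fk k h x))]
        have h1 : msNormSq Zk g ≤
            (Zk.map (fun x => 2*(f x - fk k h x)^2 + 2*(f' x - fk k h x)^2)).sum := by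
          unfold msNormSq
          exact Multiset.sum_map_le_sum_map _ _ hpt
        have h2 : (Zk.map (fun x => 2*(f x - fk k h x)^2 + 2*(f' x - fk k h x)^2)).sum
            = 2 * msNormSq Zk (fun x => f x - fk k h x)
              + 2 * msNormSq Zk (fun x => f' x - fk k h x) := by
          rw [Multiset.sum_map_add]
          unfold msNormSq
          rw [Multiset.sum_map_mul_left, Multiset.sum_map_mul_left]
        rw [hL9] at hw1 hw2
        linarith [hw1, hw2, h1, h2]
      -- contaminated buckets: those containing a point of the current episode
      set C : Finset ℕ :=
        (Finset.range js).filter (fun j => ∃ m, m < istar ∧ A m = j ∧ (elem m).1 = k) with hC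
      set U : Finset ℕ := (Finset.range js) \ C with hU
      have hCsub : C ⊆ Finset.range js := Finset.filter_subset _ _
      have hMcard : ((Finset.range istar).filter (fun m => (elem m).1 = k)).card ≤ h - 1 := by
        have hinj : ∀ m ∈ (Finset.range istar).filter (fun m => (elem m).1 = k),
            (elem m).2 ∈ Finset.Icc 1 (h-1) := by
          intro m hm
          rw [Finset.mem_filter, Finset.mem_range] at hm
          obtain ⟨hm1, hm2⟩ := hm
          have hord := hElemOrd m istar hm1 histar
          have h2lt : (elem m).2 < h := by
            rcases hord with hlt | ⟨-, hlt⟩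
            · rw [hm2, ← hk] at hlt; omega
            · exact hlt
          have := (hElemK m (hm1.trans histar)).2.2.1
          rw [Finset.mem_Icc]
          omega
        calc ((Finset.range istar).filter (fun m => (elem m).1 = k)).card
            ≤ (Finset.Icc 1 (h-1)).card := by
              apply Finset.card_le_card_of_injOn (fun m => (elem m).2) hinj
              intro m hm m' hm' hmm
              rw [Finset.coe_filter, Set.mem_setOf_eq, Finset.mem_range] at hm hm'
              apply hElemInj m m' (hm.1.trans histar) (hm'.1.trans histar)
              apply Prod.ext
              · rw [hm.2, hm'.2]
              · exact hmm
          _ = h - 1 := by rw [Nat.card_Icc]; omega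
      have hCM : C ⊆ Finset.image A ((Finset.range istar).filter (fun m => (elem m).1 = k)) := by
        intro j hj
        rw [hC, Finset.mem_filter] at hj
        obtain ⟨-, m, hm1, hm2, hm3⟩ := hj
        rw [Finset.mem_image]
        exact ⟨m, Finset.mem_filter.mpr ⟨Finset.mem_range.mpr hm1, hm3⟩, hm2⟩
      have hCcard : C.card ≤ h - 1 :=
        le_trans (Finset.card_le_card hCM) (le_trans Finset.card_image_le hMcard)
      -- every uncontaminated bucket forces a large squared norm
      have hUdep : ∀ j ∈ U, ε^2 < msNormSq (ct istar j) g := by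
        intro j hj
        have hjlt : j < js := Finset.mem_range.mp (Finset.mem_sdiff.mp hj).1
        have hdep : EpsDep F ε (ct istar j) (pts istar) :=
          hI3 istar histar j (by rw [hAistar]; exact hjlt)
        by_contra hcon
        push_neg at hcon
        have hnorm : msNorm (ct istar j) g ≤ ε := by
          unfold msNorm
          calc Real.sqrt (msNormSq (ct istar j) g) ≤ Real.sqrt (ε^2) :=
                Real.sqrt_le_sqrt hcon
            _ = ε := Real.sqrt_sq hε.le
        have habs := hdep f hf f' hf' hnorm
        have h2 := le_abs_self (f (pts istar) - f' (pts istar))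
        linarith [hw3]
      -- the uncontaminated buckets only contain points of earlier episodes
      set Mu : Finset ℕ := (Finset.range istar).filter (fun m => A m ∈ U) with hMu
      have hfiber : ∀ j ∈ U, ct istar j = (Mu.filter (fun m => A m = j)).val.map pts := by
        intro j hj
        have hFeq : (Finset.range istar).filter (fun m => A m = j) =
            Mu.filter (fun m => A m = j) := by
          ext m
          simp only [hMu, Finset.mem_filter, Finset.mem_range]
          constructor
          · rintro ⟨h1, h2⟩
            exact ⟨⟨h1, by rw [h2]; exact hj⟩, h2⟩
          · rintro ⟨⟨h1, -⟩, h2⟩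
            exact ⟨h1, h2⟩
        rw [hct]
        unfold cont
        rw [hFeq]
      have hsum1 : ∀ j ∈ U, msNormSq (ct istar j) g
          = ∑ m ∈ Mu.filter (fun m => A m = j), g (pts m)^2 := by
        intro j hj
        rw [hfiber j hj]
        unfold msNormSq
        rw [Multiset.map_map]
        rfl
      have hsum2 : ∑ j ∈ U, msNormSq (ct istar j) g = ∑ m ∈ Mu, g (pts m)^2 := by
        rw [Finset.sum_congr rfl hsum1]
        exact Finset.sum_fiberwise_of_maps_to
          (fun m hm => (Finset.mem_filter.mp hm).2) _
      have hsub : (Mu.val.map elem) ≤ (Finset.Icc 1 (k-1) ×ˢ Finset.Icc 1 H).val := by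
        apply (Multiset.le_iff_subset ?_).mpr ?_
        · apply Multiset.Nodup.map_on ?_ Mu.nodup
          intro m hm m' hm' hmm
          have h1 := (Finset.mem_filter.mp (by exact hm : m ∈ Mu)).1
          have h2 := (Finset.mem_filter.mp (by exact hm' : m' ∈ Mu)).1
          exact hElemInj m m' ((Finset.mem_range.mp h1).trans histar)
            ((Finset.mem_range.mp h2).trans histar) hmm
        · intro q hq
          obtain ⟨m, hm, rfl⟩ := Multiset.mem_map.mp hq
          have hmMu : m ∈ Mu := hm
          rw [hMu, Finset.mem_filter, Finset.mem_range] at hmMu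
          obtain ⟨hm1, hm2⟩ := hmMu
          have hAmjs : A m ∈ Finset.range js ∧ A m ∉ C := Finset.mem_sdiff.mp hm2
          have hne1 : (elem m).1 ≠ k := by
            intro hcon
            apply hAmjs.2
            rw [hC, Finset.mem_filter]
            exact ⟨hAmjs.1, m, hm1, rfl, hcon⟩
          have hord := hElemOrd m istar hm1 histar
          have hlt : (elem m).1 < k := by
            rcases hord with hlt | ⟨heq, -⟩
            · rw [← hk] at hlt; exact hlt
            · rw [← hk] at heq; exact absurd heq hne1
          obtain ⟨ha1, -, hb1, hb2⟩ := hElemK m (hm1.trans histar)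
          rw [Finset.mem_val, Finset.mem_product, Finset.mem_Icc, Finset.mem_Icc]
          refine ⟨⟨ha1, ?_⟩, hb1, hb2⟩
          omega
      have hle2 : (∑ m ∈ Mu, g (pts m)^2) ≤ msNormSq Zk g := by
        have hmap : Mu.val.map pts = (Mu.val.map elem).map (fun q : ℕ×ℕ => z q.1 q.2) := by
          rw [Multiset.map_map]
          rfl
        have hmle : (Mu.val.map pts).map (fun x => g x ^2) ≤ Zk.map (fun x => g x^2) := by
          rw [hmap, hZk]
          exact Multiset.map_le_map (Multiset.map_le_map hsub)
        obtain ⟨w, hw⟩ := Multiset.le_iff_exists_add.mp hmle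
        have heq : msNormSq Zk g = (∑ m ∈ Mu, g (pts m)^2) + w.sum := by
          unfold msNormSq
          rw [hw, Multiset.sum_add, Multiset.map_map]
          rfl
        have hwnn : (0:ℝ) ≤ w.sum := by
          apply Multiset.sum_nonneg
          intro x hx
          have hxz : x ∈ Zk.map (fun x => g x^2) := by
            rw [hw]
            exact Multiset.mem_add.mpr (Or.inr hx)
          obtain ⟨y, -, rfl⟩ := Multiset.mem_map.mp hxz
          positivity
        linarith
      have hUcard : (U.card : ℝ) * ε^2 ≤ 36*β+48 := by
        have hconst : (U.card : ℝ) * ε^2 = ∑ _j ∈ U, ε^2 := by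
          rw [Finset.sum_const, nsmul_eq_mul]
        rw [hconst]
        calc ∑ _j ∈ U, ε^2 ≤ ∑ j ∈ U, msNormSq (ct istar j) g :=
              Finset.sum_le_sum (fun j hj => (hUdep j hj).le)
          _ = ∑ m ∈ Mu, g (pts m)^2 := hsum2
          _ ≤ msNormSq Zk g := hle2
          _ ≤ 36*β+48 := hgZ
      have hU2 : (U.card : ℝ) ≤ (36*β+48)/ε^2 := by
        rw [le_div_iff₀ (by positivity)]
        exact hUcard
      have hBj : B.card ≤ js + 1 := by
        calc B.card ≤ (Finset.range (js+1)).card := by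
              apply Finset.card_le_card
              intro j hj
              rw [Finset.mem_range]
              exact Nat.lt_succ_of_le (B.le_max' j hj)
          _ = js + 1 := Finset.card_range _
      have hUC : U.card + C.card = js := by
        have hCle : C.card ≤ js := by
          calc C.card ≤ (Finset.range js).card := Finset.card_le_card hCsub
            _ = js := Finset.card_range _
        rw [hU, Finset.card_sdiff_of_subset hCsub, Finset.card_range]
        omega
      have hCH : C.card + 1 ≤ H := by omega
      have hjsr : (js : ℝ) = (U.card : ℝ) + (C.card : ℝ) := by exact_mod_cast hUC.symm
      have hCHr : (C.card : ℝ) + 1 ≤ (H : ℝ) := by exact_mod_cast hCH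
      calc (B.card : ℝ) ≤ ((js + 1 : ℕ) : ℝ) := by exact_mod_cast hBj
        _ = (js : ℝ) + 1 := by push_cast; ring
        _ = (U.card : ℝ) + ((C.card : ℝ) + 1) := by rw [hjsr]; ring
        _ ≤ (36 * β + 48) / ε ^ 2 + H := by linarith
  calc (N : ℝ) ≤ (B.card : ℝ) * d := hNBd
    _ ≤ ((36 * β + 48) / ε ^ 2 + H) * d := by
        apply mul_le_mul_of_nonneg_right hBcard (Nat.cast_nonneg d)
end

section
/- Let X be a set, F a class of real-valued functions on X, ε > 0, and d := dim_E(F, ε) with 1 ≤ d < ∞. Let H ≥ 1 and K ≥ 1 be integers, let z^k_h ∈ X for (k,h) ∈ [K]×[H], and let L ⊆ [K]×[H] be nonempty. Then there exist (k,h) ∈ L, an integer m ≥ |L|/d − H, and pairwise disjoint sub-multisets Z_1, …, Z_m of the multiset {z^τ_{h'} : (τ,h') ∈ L, τ ∈ [k−1]} such that z^k_h is ε-dependent on Z_j with respect to F for every j ∈ {1,…,m}. -/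
/-! ### Auxiliary material for the proof -/

section Aux

variable {X : Type*} (F : Set (X → ℝ)) (ε : ℝ)

private lemma prefix_filter_eq {n : ℕ} (f : Fin n → X) (i : Fin n) :
    ((Finset.univ.filter (fun j => j < i)).val.map f : Multiset X)
      = ↑((List.ofFn f).take i) := by
  have h1 : (Finset.univ.filter (fun j => j < i)) =
      Finset.univ.map (Fin.castLEEmb i.isLt.le) := by
    ext j
    simp only [Finset.mem_filter, Finset.mem_map, Finset.mem_univ, true_and,
      Fin.castLEEmb_apply, Fin.lt_def, Fin.ext_iff]
    constructor
    · intro hj; exact ⟨⟨j, hj⟩, rfl⟩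
    · rintro ⟨a, ha⟩; exact ha ▸ a.isLt
  rw [h1, Finset.map_val, Multiset.map_map, ← Fin.ofFn_take_eq_take_ofFn i.isLt.le f,
    Fin.univ_val_map]
  congr 1

/-- A list all of whose elements are `ε`-independent of their predecessors. -/
def IndepX (l : List X) : Prop :=
  ∀ i : ℕ, ∀ h : i < l.length, ¬ EpsDep F ε ↑(l.take i) l[i]

variable {F ε}

lemma indepX_append {l : List X} {x : X}
    (hl : IndepX F ε l) (hx : ¬ EpsDep F ε ↑l x) : IndepX F ε (l ++ [x]) := by
  intro i h
  rcases Nat.lt_or_ge i l.length with hi | hi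
  · rw [List.take_append_of_le_length hi.le, List.getElem_append_left hi]
    exact hl i hi
  · have h' : i < l.length + 1 := by simpa using h
    have hi' : i = l.length := by omega
    subst hi'
    rw [List.take_append_of_le_length le_rfl, List.take_length]
    simpa [List.getElem_concat_length] using hx

lemma eluderLen_of_indepX {l : List X} (hl : IndepX F ε l) : EluderLen F ε l.length := by
  refine ⟨ε, le_rfl, l.get, fun i => ?_⟩
  have h := prefix_filter_eq l.get i
  rw [List.ofFn_get] at h
  rw [h]
  exact hl i i.isLt

lemma epsDep_of_full {d : ℕ} (hd : IsGreatest {n : ℕ | EluderLen F ε n} d)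
    {l : List X} (hl : IndepX F ε l) (hlen : l.length = d) (x : X) :
    EpsDep F ε ↑l x := by
  by_contra hx
  have h2 : EluderLen F ε (l ++ [x]).length := eluderLen_of_indepX (indepX_append hl hx)
  have h3 := hd.2 h2
  simp only [List.length_append, List.length_singleton, hlen] at h3
  omega

/-- The greedy bucket-filling process. -/
lemma process (zf : ℕ × ℕ → X) {d : ℕ} (hd : IsGreatest {n : ℕ | EluderLen F ε n} d)
    (N : ℕ) (P : List (ℕ × ℕ)) : ∀ (D : List (ℕ × ℕ)) (B : Fin N → List (ℕ × ℕ)),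
    (∀ i, IndepX F ε ((B i).map zf)) →
    (∀ i, (B i).length ≤ d) →
    ((∑ i, ↑(B i) : Multiset (ℕ × ℕ)) ≤ ↑D) →
    (D.length = ∑ i, (B i).length) →
    (∃ B' : Fin N → List (ℕ × ℕ),
      ((D ++ P).length = ∑ i, (B' i).length) ∧ ∀ i, (B' i).length ≤ d)
    ∨ (∃ q P1 P2, P = P1 ++ q :: P2 ∧ ∃ B' : Fin N → List (ℕ × ℕ),
        ((∑ i, ↑(B' i) : Multiset (ℕ × ℕ)) ≤ ↑(D ++ P1)) ∧
        ∀ i, EpsDep F ε ↑((B' i).map zf) (zf q)) := by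
  classical
  induction P with
  | nil =>
    intro D B h1 h2 h3 h4
    exact Or.inl ⟨B, by simpa using h4, h2⟩
  | cons q P' ih =>
    intro D B h1 h2 h3 h4
    by_cases hq : ∃ i, (B i).length < d ∧ ¬ EpsDep F ε ↑((B i).map zf) (zf q)
    · obtain ⟨i0, hi0len, hi0dep⟩ := hq
      set B2 : Fin N → List (ℕ × ℕ) := Function.update B i0 (B i0 ++ [q]) with hB2
      have hB2eq : ∀ i, B2 i = if i = i0 then B i0 ++ [q] else B i := by
        intro i; by_cases hi : i = i0 <;> simp [hB2, Function.update_apply, hi]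
      have hind : ∀ i, IndepX F ε ((B2 i).map zf) := by
        intro i
        rw [hB2eq i]
        split_ifs with hi
        · simpa using indepX_append (h1 i0) hi0dep
        · exact h1 i
      have hlen : ∀ i, (B2 i).length ≤ d := by
        intro i
        rw [hB2eq i]
        split_ifs with hi
        · simp only [List.length_append, List.length_singleton]; omega
        · exact h2 i
      have hpt : ∀ i, (↑(B2 i) : Multiset (ℕ × ℕ)) =
          ↑(B i) + (if i = i0 then ({q} : Multiset (ℕ × ℕ)) else 0) := by
        intro i
        rw [hB2eq i]
        split_ifs with hi
        · subst hi; rfl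
        · simp
      have hpt2 : ∀ i, (B2 i).length = (B i).length + (if i = i0 then 1 else 0) := by
        intro i
        rw [hB2eq i]
        split_ifs with hi
        · subst hi; simp
        · simp
      have hsum : (∑ i, ↑(B2 i) : Multiset (ℕ × ℕ)) = (∑ i, ↑(B i)) + {q} := by
        rw [Finset.sum_congr rfl (fun i _ => hpt i), Finset.sum_add_distrib]
        congr 1
        simp
      have hsum2 : (∑ i, (B2 i).length) = (∑ i, (B i).length) + 1 := by
        rw [Finset.sum_congr rfl (fun i _ => hpt2 i), Finset.sum_add_distrib]
        congr 1
        simp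
      have hsub : (∑ i, ↑(B2 i) : Multiset (ℕ × ℕ)) ≤ ↑(D ++ [q]) := by
        rw [hsum]
        have h5 : (↑(D ++ [q]) : Multiset (ℕ × ℕ)) = ↑D + {q} := rfl
        rw [h5]
        exact add_le_add_left h3 _
      have hcnt : (D ++ [q]).length = ∑ i, (B2 i).length := by
        rw [hsum2]; simp [h4]
      rcases ih (D ++ [q]) B2 hind hlen hsub hcnt with ⟨B', hB'1, hB'2⟩ |
        ⟨q', P1', P2', hsp, B', hB'1, hB'2⟩
      · left
        refine ⟨B', ?_, hB'2⟩
        simpa [List.append_assoc] using hB'1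
      · right
        refine ⟨q', q :: P1', P2', by rw [hsp]; rfl, B', ?_, hB'2⟩
        simpa [List.append_assoc] using hB'1
    · right
      push_neg at hq
      refine ⟨q, [], P', rfl, B, by simpa using h3, fun i => ?_⟩
      rcases Nat.lt_or_ge (B i).length d with hlt | hge
      · exact hq i hlt
      · refine epsDep_of_full hd (h1 i) ?_ (zf q)
        have := h2 i
        simp only [List.length_map]
        omega

end Aux

/-- pigeonhole step in Lemma 10 of the paper: for any nonempty set `L` of
indices there is some `(k,h) ∈ L` and at least `|L|/d − H` pairwise disjoint sub-multisets of
the data indexed by `L` with episode index `< k`, on each of which `z^k_h` is `ε`-dependent. -/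
theorem exists_dependent_point {X : Type*} (F : Set (X → ℝ))
    (ε : ℝ) (hε : 0 < ε)
    (d : ℕ) (hd1 : 1 ≤ d) (hd : IsGreatest {n : ℕ | EluderLen F ε n} d)
    (H K : ℕ) (hH : 1 ≤ H) (hK : 1 ≤ K)
    (z : ℕ → ℕ → X)
    (L : Finset (ℕ × ℕ)) (hL : L ⊆ Finset.Icc 1 K ×ˢ Finset.Icc 1 H) (hLne : L.Nonempty) :
    ∃ k h : ℕ, (k, h) ∈ L ∧ ∃ m : ℕ, (L.card : ℝ) / d - H ≤ m ∧
      ∃ Zs : Fin m → Multiset X,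
        (∑ j : Fin m, Zs j) ≤
          ((L.filter (fun q : ℕ × ℕ => q.1 < k)).val.map (fun q : ℕ × ℕ => z q.1 q.2)) ∧
        ∀ j : Fin m, EpsDep F ε (Zs j) (z k h) := by
  have hdpos : 0 < d := hd1
  set N : ℕ := (L.card - 1) / d with hNdef
  obtain ⟨P, hperm, hsort⟩ : ∃ P : List (ℕ × ℕ), P.Perm L.val.toList ∧
      P.Pairwise (fun a b => a.1 ≤ b.1) := by
    refine ⟨(L.val.toList).mergeSort (fun a b => decide (a.1 ≤ b.1)),
      List.mergeSort_perm _ _, ?_⟩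
    have hs := List.pairwise_mergeSort (le := fun a b : ℕ × ℕ => decide (a.1 ≤ b.1))
      (fun a b c h1 h2 => by simp at *; omega) (fun a b => by simp; omega) L.val.toList
    exact hs.imp (by simp)
  have hPmul : (↑P : Multiset (ℕ × ℕ)) = L.val := by
    rw [← Multiset.coe_toList L.val]
    exact Multiset.coe_eq_coe.mpr hperm
  have hPlen : P.length = L.card := by
    rw [hperm.length_eq, Multiset.length_toList]
    rfl
  have hcard1 : 1 ≤ L.card := Finset.card_pos.mpr hLne
  rcases process (F := F) (ε := ε) (fun q => z q.1 q.2) hd N P [] (fun _ => [])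
      (fun i => by intro j hj; simp at hj)
      (fun i => Nat.zero_le d) (by simp) (by simp) with
    ⟨B', hB'1, hB'2⟩ | ⟨q, P1, P2, hsp, B', hsub, hdep⟩
  · -- impossible: all points were placed
    exfalso
    have hle : ∑ i, (B' i).length ≤ N * d := by
      calc ∑ i, (B' i).length ≤ ∑ _i : Fin N, d := Finset.sum_le_sum (fun i _ => hB'2 i)
      _ = N * d := by simp [Finset.sum_const, Finset.card_univ, smul_eq_mul]
    have h6 : N * d ≤ L.card - 1 := Nat.div_mul_le_self _ _
    rw [List.nil_append, hPlen] at hB'1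
    omega
  · obtain ⟨k, h⟩ := q
    rw [List.nil_append] at hsub
    have hqP : ((k, h) : ℕ × ℕ) ∈ P := by
      rw [hsp]; exact List.mem_append_right _ List.mem_cons_self
    have hqL : (k, h) ∈ L := by
      have h7 : ((k, h) : ℕ × ℕ) ∈ (↑P : Multiset (ℕ × ℕ)) := Multiset.mem_coe.mpr hqP
      rw [hPmul] at h7
      exact h7
    have hmono : ∀ p ∈ P1, p.1 ≤ k := by
      have hp := hsp ▸ hsort
      rw [List.pairwise_append] at hp
      intro p hp1
      exact hp.2.2 p hp1 (k, h) List.mem_cons_self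
    have hP1L : (↑P1 : Multiset (ℕ × ℕ)) + {(k, h)} ≤ L.val := by
      rw [← hPmul, hsp]
      have e1 : (↑(P1 ++ (k, h) :: P2) : Multiset (ℕ × ℕ)) = ↑P1 + ((k, h) ::ₘ ↑P2) := by
        simp
      rw [e1]
      refine add_le_add_right ?_ _
      exact Multiset.singleton_le.mpr (Multiset.mem_cons_self _ _)
    classical
    set S : Multiset (ℕ × ℕ) := ∑ i, (↑(B' i) : Multiset (ℕ × ℕ)) with hS
    set keep : Finset (Fin N) := Finset.univ.filter (fun i => ∀ p ∈ B' i, p.1 < k)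
      with hkeep
    refine ⟨k, h, hqL, keep.card, ?_, ?_⟩
    · -- the cardinality bound
      set lost : Finset (Fin N) := Finset.univ.filter (fun i => ¬ ∀ p ∈ B' i, p.1 < k)
        with hlost
      have hsplitcard : keep.card + lost.card = N := by
        rw [hkeep, hlost, Finset.card_filter_add_card_filter_not]
        simp
      have hlostK : ∀ i ∈ lost,
          1 ≤ Multiset.card ((↑(B' i) : Multiset (ℕ × ℕ)).filter (fun p => p.1 = k)) := by
        intro i hi
        rw [hlost, Finset.mem_filter] at hi
        push_neg at hi
        obtain ⟨p, hpmem, hpk⟩ := hi.2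
        have h8 : (↑(B' i) : Multiset (ℕ × ℕ)) ≤ S :=
          Finset.single_le_sum (f := fun i => (↑(B' i) : Multiset (ℕ × ℕ)))
            (fun i _ => zero_le) (Finset.mem_univ i)
        have h9 : p ∈ P1 :=
          Multiset.mem_coe.mp (Multiset.mem_of_le (h8.trans hsub) (Multiset.mem_coe.mpr hpmem))
        have hpk' : p.1 = k := le_antisymm (hmono p h9) (by omega)
        have h10 : p ∈ (↑(B' i) : Multiset (ℕ × ℕ)).filter (fun p => p.1 = k) :=
          Multiset.mem_filter.mpr ⟨Multiset.mem_coe.mpr hpmem, hpk'⟩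
        exact Multiset.card_pos_iff_exists_mem.mpr ⟨p, h10⟩
      have hfiltersum : ∀ s : Finset (Fin N),
          (∑ i ∈ s, (↑(B' i) : Multiset (ℕ × ℕ)).filter (fun p => p.1 = k))
            = (∑ i ∈ s, (↑(B' i) : Multiset (ℕ × ℕ))).filter (fun p => p.1 = k) := by
        intro s
        induction s using Finset.cons_induction with
        | empty => simp
        | cons a s ha ih => rw [Finset.sum_cons, Finset.sum_cons, Multiset.filter_add, ih]
      have hcardsum : ∀ s : Finset (Fin N), ∀ f : Fin N → Multiset (ℕ × ℕ),
          Multiset.card (∑ i ∈ s, f i) = ∑ i ∈ s, Multiset.card (f i) := by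
        intro s f
        induction s using Finset.cons_induction with
        | empty => simp
        | cons a s ha ih => rw [Finset.sum_cons, Finset.sum_cons, Multiset.card_add, ih]
      have hlostcard : lost.card ≤ Multiset.card (S.filter (fun p => p.1 = k)) := by
        calc lost.card = ∑ _i ∈ lost, 1 := by simp
        _ ≤ ∑ i ∈ lost, Multiset.card ((↑(B' i) : Multiset (ℕ × ℕ)).filter (fun p => p.1 = k)) :=
            Finset.sum_le_sum hlostK
        _ = Multiset.card (∑ i ∈ lost,
              (↑(B' i) : Multiset (ℕ × ℕ)).filter (fun p => p.1 = k)) := (hcardsum _ _).symm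
        _ = Multiset.card ((∑ i ∈ lost, (↑(B' i) : Multiset (ℕ × ℕ))).filter
              (fun p => p.1 = k)) := by rw [hfiltersum]
        _ ≤ _ := Multiset.card_le_card (Multiset.filter_le_filter _
              (Finset.sum_le_sum_of_subset (Finset.subset_univ lost)))
      have hSk : Multiset.card (S.filter (fun p => p.1 = k)) + 1
          ≤ Multiset.card (L.val.filter (fun p => p.1 = k)) := by
        have h10 : S + {((k, h) : ℕ × ℕ)} ≤ ↑P1 + {((k, h) : ℕ × ℕ)} := add_le_add_left hsub _
        have h11 := h10.trans hP1L
        have h12 := Multiset.filter_le_filter (fun p : ℕ × ℕ => p.1 = k) h11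
        rw [Multiset.filter_add, Multiset.filter_singleton, if_pos rfl] at h12
        have h13 := Multiset.card_le_card h12
        rw [Multiset.card_add, Multiset.card_singleton] at h13
        exact h13
      have hkH : Multiset.card (L.val.filter (fun p : ℕ × ℕ => p.1 = k)) ≤ H := by
        have e2 : L.val.filter (fun p : ℕ × ℕ => p.1 = k)
            = (L.filter (fun p : ℕ × ℕ => p.1 = k)).val := rfl
        rw [e2]
        have e3 : Multiset.card (L.filter (fun p : ℕ × ℕ => p.1 = k)).val
            = (L.filter (fun p : ℕ × ℕ => p.1 = k)).card := rfl
        rw [e3]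
        have h14 : (L.filter (fun p : ℕ × ℕ => p.1 = k)).card ≤ (Finset.Icc 1 H).card := by
          refine Finset.card_le_card_of_injOn (fun p => p.2) ?_ ?_
          · intro p hp
            rw [Finset.mem_coe, Finset.mem_filter] at hp
            have := hL hp.1
            rw [Finset.mem_product] at this
            exact this.2
          · intro p hp p' hp' hpp
            simp only [Finset.coe_filter, Set.mem_setOf_eq] at hp hp'
            exact Prod.ext (hp.2.trans hp'.2.symm) hpp
        rwa [Nat.card_Icc, Nat.add_sub_cancel] at h14
      -- now the real-number inequality
      have hnat : L.card ≤ (keep.card + H) * d := by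
        have h15 : L.card ≤ (N + 1) * d := by
          have e4 := Nat.div_add_mod (L.card - 1) d
          have e5 : (L.card - 1) % d < d := Nat.mod_lt _ hdpos
          have e6 : L.card - 1 + 1 ≤ d * N + d := by
            rw [hNdef]
            omega
          have e7 : d * N + d = (N + 1) * d := by ring
          omega
        have h16 : N + 1 ≤ keep.card + H := by omega
        exact h15.trans (Nat.mul_le_mul_right d h16)
      have hd' : (0 : ℝ) < d := by exact_mod_cast hdpos
      rw [sub_le_iff_le_add, div_le_iff₀ hd']
      calc (L.card : ℝ) ≤ ((keep.card + H) * d : ℕ) := by exact_mod_cast hnat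
      _ = (keep.card + H) * d := by push_cast; ring
      _ = (keep.card + H) * d := by ring
    · -- the multisets
      have e := keep.equivFin
      refine ⟨fun j => (↑((B' ((e.symm j) : Fin N)).map (fun q : ℕ × ℕ => z q.1 q.2))
        : Multiset X), ?_, ?_⟩
      have hsumeq : (∑ j : Fin keep.card,
            (↑((B' ((e.symm j) : Fin N)).map (fun q : ℕ × ℕ => z q.1 q.2)) : Multiset X))
          = ∑ i ∈ keep, (↑((B' i).map (fun q : ℕ × ℕ => z q.1 q.2)) : Multiset X) := by
        rw [← Finset.sum_coe_sort keep
          (fun i => (↑((B' i).map (fun q : ℕ × ℕ => z q.1 q.2)) : Multiset X))]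
        exact Equiv.sum_comp e.symm
          (fun x : {i // i ∈ keep} => (↑((B' x).map (fun q : ℕ × ℕ => z q.1 q.2)) : Multiset X))
      · rw [hsumeq]
        have hkeepsub : (∑ i ∈ keep, (↑(B' i) : Multiset (ℕ × ℕ)))
            ≤ L.val.filter (fun p : ℕ × ℕ => p.1 < k) := by
          rw [Multiset.le_filter]
          constructor
          · refine le_trans (Finset.sum_le_sum_of_subset (Finset.subset_univ keep)) ?_
            refine le_trans hsub ?_
            refine le_trans ?_ hP1L
            exact le_add_right le_rfl
          · intro a ha
            rw [Multiset.mem_sum] at ha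
            obtain ⟨i, hik, hai⟩ := ha
            rw [hkeep, Finset.mem_filter] at hik
            exact hik.2 a (Multiset.mem_coe.mp hai)
        have e8 : ∑ i ∈ keep, (↑((B' i).map (fun q : ℕ × ℕ => z q.1 q.2)) : Multiset X)
            = Multiset.map (fun q : ℕ × ℕ => z q.1 q.2)
                (∑ i ∈ keep, (↑(B' i) : Multiset (ℕ × ℕ))) := by
          rw [← Multiset.coe_mapAddMonoidHom, map_sum]
          rfl
        rw [e8]
        refine le_trans (Multiset.map_le_map hkeepsub) ?_
        rw [Finset.filter_val]
      · intro j
        exact hdep ((e.symm j) : Fin N)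
end

section
/- Let T ≥ 1 be an integer and let H ≥ 1, d ≥ 1, c > 0, β ≥ 0 be reals. Let w_1 ≥ w_2 ≥ ⋯ ≥ w_T be real numbers with 0 ≤ w_t ≤ 4H for every t ∈ [T], and suppose that every t ∈ [T] with w_t ≥ 1/T satisfies t ≤ (c·β/w_t² + H)·d. Then ∑_{t=1}^{T} w_t ≤ 1 + 4H²·d + 2·√(c·d·T·β). -/
set_option maxHeartbeats 1000000

/-- the deterministic summation bound in Lemma 11 of the paper: if
`w_1 ≥ ⋯ ≥ w_T` are reals in `[0, 4H]` and every `t` with `w_t ≥ 1/T` satisfies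
`t ≤ (cβ/w_t² + H)·d`, then `∑_{t=1}^T w_t ≤ 1 + 4H²d + 2√(c·d·T·β)`. -/
theorem bonus_sum_bound (T : ℕ) (hT : 1 ≤ T)
    (H d c β : ℝ) (hH : 1 ≤ H) (hd : 1 ≤ d) (hc : 0 < c) (hβ : 0 ≤ β)
    (w : ℕ → ℝ)
    (hmono : ∀ t t' : ℕ, 1 ≤ t → t ≤ t' → t' ≤ T → w t' ≤ w t)
    (hw0 : ∀ t ∈ Finset.Icc 1 T, 0 ≤ w t)
    (hw4H : ∀ t ∈ Finset.Icc 1 T, w t ≤ 4 * H)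
    (hkey : ∀ t ∈ Finset.Icc 1 T, 1 / (T : ℝ) ≤ w t → (t : ℝ) ≤ (c * β / (w t) ^ 2 + H) * d) :
    ∑ t ∈ Finset.Icc 1 T, w t ≤ 1 + 4 * H ^ 2 * d + 2 * Real.sqrt (c * d * T * β) := by
  have hT0 : (0:ℝ) < T := by exact_mod_cast hT
  have hHd1 : (1:ℝ) ≤ H * d := by nlinarith
  have hHdpos : (0:ℝ) ≤ H * d := by linarith
  obtain ⟨m, hm⟩ : ∃ m : ℕ, m = ⌊H * d⌋₊ := ⟨_, rfl⟩
  have hm_le : (m:ℝ) ≤ H * d := by rw [hm]; exact Nat.floor_le hHdpos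
  have hm_lt : H * d < (m:ℝ) + 1 := by rw [hm]; exact Nat.lt_floor_add_one (H * d)
  obtain ⟨η, hηdef⟩ : ∃ η : ℝ, η = (m:ℝ) + 1 - H * d := ⟨_, rfl⟩
  have hη0 : 0 < η := by rw [hηdef]; linarith
  have hη1 : η ≤ 1 := by rw [hηdef]; linarith
  obtain ⟨A, hAdef⟩ : ∃ A : ℝ, A = c * β * d := ⟨_, rfl⟩
  have hA : 0 ≤ A := by rw [hAdef]; positivity
  obtain ⟨a, hadef⟩ : ∃ a : ℝ, a = Real.sqrt A := ⟨_, rfl⟩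
  have ha : 0 ≤ a := by rw [hadef]; exact Real.sqrt_nonneg A
  obtain ⟨s, hsdef⟩ : ∃ s : ℝ, s = Real.sqrt η := ⟨_, rfl⟩
  have hs0 : 0 < s := by rw [hsdef]; exact Real.sqrt_pos.mpr hη0
  have hs2 : s ^ 2 = η := by rw [hsdef]; exact Real.sq_sqrt hη0.le
  have hs1 : s ≤ 1 := by nlinarith [hs2, hs0]
  -- per-term bound
  have hterm : ∀ t ∈ Finset.Icc 1 T, w t ≤ 1 / (T:ℝ)
      + ((if t ≤ m then 4 * H else 0) + (if t = m + 1 then 4 * H * (1 - η) else 0)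
        + 2 * a * (Real.sqrt ((t:ℝ) - H * d) - Real.sqrt ((t:ℝ) - 1 - H * d))) := by
    intro t ht
    obtain ⟨ht1, htT⟩ := Finset.mem_Icc.mp ht
    have htel : 0 ≤ Real.sqrt ((t:ℝ) - H * d) - Real.sqrt ((t:ℝ) - 1 - H * d) := by
      have := Real.sqrt_le_sqrt (show (t:ℝ) - 1 - H * d ≤ (t:ℝ) - H * d by linarith)
      linarith
    have h1T : 0 ≤ 1 / (T:ℝ) := by positivity
    have hatel := mul_nonneg ha htel
    by_cases hwt : 1 / (T:ℝ) ≤ w t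
    · have hk := hkey t ht hwt
      have hwpos : 0 < w t := lt_of_lt_of_le (by positivity) hwt
      have hkey2 : ((t:ℝ) - H * d) * (w t) ^ 2 ≤ A := by
        have h1 : (t:ℝ) - H * d ≤ A / (w t) ^ 2 := by
          have h2 : (c * β / (w t) ^ 2 + H) * d = A / (w t) ^ 2 + H * d := by
            rw [hAdef]; ring
          rw [h2] at hk; linarith
        exact (le_div_iff₀ (by positivity)).mp h1
      rcases lt_trichotomy t (m+1) with hcase | hcase | hcase
      · -- t ≤ m
        have htm : t ≤ m := Nat.lt_succ_iff.mp hcase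
        have hb := hw4H t ht
        rw [if_pos htm, if_neg (by omega : ¬ t = m + 1)]
        linarith
      · -- t = m + 1
        subst hcase
        have hcast : ((m + 1 : ℕ) : ℝ) = (m:ℝ) + 1 := by push_cast; ring
        have hx : ((m + 1 : ℕ):ℝ) - H * d = η := by rw [hcast, hηdef]
        have hws : w (m+1) * s ≤ a := by
          rw [hadef]
          apply Real.le_sqrt_of_sq_le
          have h3 : (w (m+1) * s) ^ 2 = η * (w (m+1)) ^ 2 := by
            rw [mul_pow, hs2]; ring
          rw [h3]
          calc η * (w (m+1))^2 = (((m+1:ℕ):ℝ) - H * d) * (w (m+1))^2 := by rw [hx]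
            _ ≤ A := hkey2
        have hb := hw4H (m+1) ht
        have hzero : Real.sqrt (((m+1:ℕ):ℝ) - 1 - H * d) = 0 := by
          apply Real.sqrt_eq_zero'.mpr
          rw [hcast]; linarith
        have hsqη : Real.sqrt (((m+1:ℕ):ℝ) - H * d) = s := by
          rw [hx, hsdef]
        rw [if_neg (by omega : ¬ m + 1 ≤ m), if_pos rfl, hzero, hsqη]
        have key : w (m+1) ≤ 4 * H * (1 - η) + 2 * a * s := by
          have hq1 : 0 ≤ 2 * s * (a - w (m+1) * s) := by nlinarith
          have hq2 : 0 ≤ (4 * H - w (m+1)) * (1 - s^2) := by nlinarith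
          have hq3 : 0 ≤ w (m+1) * s^2 := by positivity
          nlinarith [hs2]
        simp only [zero_add, sub_zero]
        linarith only [key, h1T]
      · -- t ≥ m + 2
        have htm2 : m + 2 ≤ t := hcase
        have hxgt : (1:ℝ) + η ≤ (t:ℝ) - H * d := by
          have h4 : ((m:ℝ) + 2) ≤ (t:ℝ) := by exact_mod_cast htm2
          rw [hηdef]; linarith
        have hx1 : (1:ℝ) < (t:ℝ) - H * d := by linarith
        have hu2 : (Real.sqrt ((t:ℝ) - H * d)) ^ 2 = (t:ℝ) - H * d :=
          Real.sq_sqrt (by linarith)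
        have hveq : Real.sqrt ((t:ℝ) - 1 - H * d)
            = Real.sqrt (((t:ℝ) - H * d) - 1) := by congr 1; ring
        have hv2 : (Real.sqrt (((t:ℝ) - H * d) - 1)) ^ 2 = ((t:ℝ) - H * d) - 1 :=
          Real.sq_sqrt (by linarith)
        set u : ℝ := Real.sqrt ((t:ℝ) - H * d) with hudef
        set v : ℝ := Real.sqrt (((t:ℝ) - H * d) - 1) with hvdef
        have hu0 : 0 ≤ u := Real.sqrt_nonneg _
        have hv0 : 0 ≤ v := Real.sqrt_nonneg _
        have huv : v ≤ u := Real.sqrt_le_sqrt (by linarith)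
        have hwu : w t * u ≤ a := by
          rw [hadef]
          apply Real.le_sqrt_of_sq_le
          have h5 : (w t * u) ^ 2 = ((t:ℝ) - H * d) * (w t) ^ 2 := by
            rw [mul_pow, hu2]; ring
          rw [h5]; exact hkey2
        have hP2 : 0 ≤ 2 * u^2 - 2 * u * v - 1 := by nlinarith [sq_nonneg (u - v)]
        have key : w t ≤ 2 * a * (u - v) := by
          nlinarith [mul_nonneg (sub_nonneg.mpr hwu) (sub_nonneg.mpr huv),
            mul_nonneg (hw0 t ht) hP2]
        rw [if_neg (by omega : ¬ t ≤ m), if_neg (by omega : ¬ t = m + 1), hveq]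
        linarith
    · -- small w
      have hwlt : w t ≤ 1 / (T:ℝ) := le_of_not_ge hwt
      have i1 : (0:ℝ) ≤ (if t ≤ m then 4 * H else 0) := by split_ifs <;> linarith
      have i2 : (0:ℝ) ≤ (if t = m + 1 then 4 * H * (1 - η) else 0) := by
        split_ifs <;> nlinarith
      linarith
  -- sum the bound
  have hsum := Finset.sum_le_sum hterm
  have hcard : (Finset.Icc 1 T).card = T := by rw [Nat.card_Icc]; omega
  have hconst : ∑ _t ∈ Finset.Icc 1 T, 1 / (T:ℝ) = 1 := by
    rw [Finset.sum_const, hcard, nsmul_eq_mul]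
    field_simp
  have hS1 : ∑ t ∈ Finset.Icc 1 T, (if t ≤ m then 4 * H else 0) ≤ 4 * H * m := by
    rw [← Finset.sum_filter]
    have hsub : (Finset.Icc 1 T).filter (· ≤ m) ⊆ Finset.Icc 1 m := by
      intro t htmem
      simp only [Finset.mem_filter, Finset.mem_Icc] at htmem ⊢
      exact ⟨htmem.1.1, htmem.2⟩
    calc ∑ _t ∈ (Finset.Icc 1 T).filter (· ≤ m), 4 * H
        = ((Finset.Icc 1 T).filter (· ≤ m)).card * (4 * H) := by
          rw [Finset.sum_const, nsmul_eq_mul]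
      _ ≤ (m : ℝ) * (4 * H) := by
          have hc' : ((Finset.Icc 1 T).filter (· ≤ m)).card ≤ m := by
            calc ((Finset.Icc 1 T).filter (· ≤ m)).card ≤ (Finset.Icc 1 m).card :=
                  Finset.card_le_card hsub
              _ = m := by rw [Nat.card_Icc]; omega
          have hc'' : (((Finset.Icc 1 T).filter (· ≤ m)).card : ℝ) ≤ (m:ℝ) := by
            exact_mod_cast hc'
          nlinarith
      _ = 4 * H * m := by ring
  have hS2 : ∑ t ∈ Finset.Icc 1 T, (if t = m + 1 then 4 * H * (1 - η) else 0)
      ≤ 4 * H * (1 - η) := by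
    rw [Finset.sum_ite_eq' (Finset.Icc 1 T) (m+1) (fun _ => 4 * H * (1 - η))]
    split_ifs <;> nlinarith
  have hS3 : ∑ t ∈ Finset.Icc 1 T,
      2 * a * (Real.sqrt ((t:ℝ) - H * d) - Real.sqrt ((t:ℝ) - 1 - H * d))
      ≤ 2 * a * Real.sqrt T := by
    have htel : ∑ t ∈ Finset.Icc 1 T,
        (Real.sqrt ((t:ℝ) - H * d) - Real.sqrt ((t:ℝ) - 1 - H * d))
        = Real.sqrt ((T:ℝ) - H * d) - Real.sqrt (((0:ℕ):ℝ) - H * d) := by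
      have h1 : Finset.Icc 1 T = Finset.Ico 1 (T+1) := by
        rw [Finset.Ico_add_one_right_eq_Icc]
      rw [h1, Finset.sum_Ico_eq_sum_range]
      have h2 : ∀ i : ℕ, Real.sqrt (((1 + i : ℕ):ℝ) - H * d)
          - Real.sqrt (((1 + i : ℕ):ℝ) - 1 - H * d)
          = (fun j : ℕ => Real.sqrt ((j:ℝ) - H * d)) (i + 1)
            - (fun j : ℕ => Real.sqrt ((j:ℝ) - H * d)) i := by
        intro i; push_cast; ring_nf
      simp only [show T + 1 - 1 = T from rfl]
      rw [Finset.sum_congr rfl (fun i _ => h2 i), Finset.sum_range_sub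
        (fun j : ℕ => Real.sqrt ((j:ℝ) - H * d))]
    rw [← Finset.mul_sum, htel]
    have hz : Real.sqrt (((0:ℕ):ℝ) - H * d) = 0 := Real.sqrt_eq_zero'.mpr (by
      push_cast; linarith)
    have hle : Real.sqrt ((T:ℝ) - H * d) ≤ Real.sqrt T :=
      Real.sqrt_le_sqrt (by linarith)
    rw [hz]
    nlinarith [Real.sqrt_nonneg ((T:ℝ) - H * d)]
  have hfinal : a * Real.sqrt T = Real.sqrt (c * d * T * β) := by
    rw [hadef, ← Real.sqrt_mul hA]
    congr 1
    rw [hAdef]; ring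
  have hHdsum : 4 * H * (m:ℝ) + 4 * H * (1 - η) = 4 * H ^ 2 * d := by
    rw [hηdef]; nlinarith [hm_le, hm_lt]
  have hsplit : ∑ t ∈ Finset.Icc 1 T, (1 / (T:ℝ)
      + ((if t ≤ m then 4 * H else 0) + (if t = m + 1 then 4 * H * (1 - η) else 0)
        + 2 * a * (Real.sqrt ((t:ℝ) - H * d) - Real.sqrt ((t:ℝ) - 1 - H * d))))
      = (∑ _t ∈ Finset.Icc 1 T, 1 / (T:ℝ))
        + ((∑ t ∈ Finset.Icc 1 T, (if t ≤ m then 4 * H else 0))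
          + (∑ t ∈ Finset.Icc 1 T, (if t = m + 1 then 4 * H * (1 - η) else 0))
          + ∑ t ∈ Finset.Icc 1 T,
              2 * a * (Real.sqrt ((t:ℝ) - H * d) - Real.sqrt ((t:ℝ) - 1 - H * d))) := by
    simp only [Finset.sum_add_distrib]
  calc ∑ t ∈ Finset.Icc 1 T, w t
      ≤ ∑ t ∈ Finset.Icc 1 T, (1 / (T:ℝ)
        + ((if t ≤ m then 4 * H else 0) + (if t = m + 1 then 4 * H * (1 - η) else 0)
          + 2 * a * (Real.sqrt ((t:ℝ) - H * d) - Real.sqrt ((t:ℝ) - 1 - H * d)))) := hsum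
    _ ≤ 1 + (4 * H * m + 4 * H * (1 - η) + 2 * a * Real.sqrt T) := by
        rw [hsplit, hconst]; linarith
    _ = 1 + 4 * H ^ 2 * d + 2 * Real.sqrt (c * d * T * β) := by
        rw [← hfinal]; linarith [hHdsum]
end

section
/- Let X be a set, F a nonempty class of real-valued functions on X, z_1, …, z_n ∈ X with Z the corresponding multiset, q_1, …, q_n ∈ ℝ, and f* ∈ F. For g : X → ℝ write ‖g‖_D := (∑_{t=1}^n (g(z_t) − q_t)²)^{1/2}. Let B, C ≥ 0 and suppose that for every f ∈ F: ∑_{t=1}^{n} (f(z_t) − f*(z_t))·(f*(z_t) − q_t) ≥ −B·(‖f − f*‖_Z + 2) − C. If f̂ ∈ F satisfies ‖f̂‖_D ≤ ‖f‖_D for all f ∈ F (i.e., f̂ is a least-squares minimizer over F), then ‖f̂ − f*‖²_Z ≤ 2B·‖f̂ − f*‖_Z + 4B + 2C, and consequently ‖f̂ − f*‖_Z ≤ 2B + √(4B + 2C). -/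
/-- the deterministic least-squares "basic inequality" of Lemma 6 of the
paper: if the cross term is bounded below by `−B(‖f − f*‖_Z + 2) − C` for every `f ∈ F` and
`f̂` is a least-squares minimizer over `F`, then `‖f̂ − f*‖²_Z ≤ 2B‖f̂ − f*‖_Z + 4B + 2C`, and
consequently `‖f̂ − f*‖_Z ≤ 2B + √(4B + 2C)`. -/
theorem least_squares_basic_inequality {X : Type*} (F : Set (X → ℝ)) (hFne : F.Nonempty)
    (n : ℕ) (z : ℕ → X) (q : ℕ → ℝ)
    (fstar : X → ℝ) (hfstar : fstar ∈ F)
    (B C : ℝ) (hB : 0 ≤ B) (hC : 0 ≤ C)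
    (hcross : ∀ f ∈ F,
      -B * (msNorm ((Finset.Icc 1 n).val.map z) (fun x => f x - fstar x) + 2) - C ≤
        ∑ t ∈ Finset.Icc 1 n, (f (z t) - fstar (z t)) * (fstar (z t) - q t))
    (fhat : X → ℝ) (hfhat : fhat ∈ F)
    (hmin : ∀ f ∈ F,
      Real.sqrt (∑ t ∈ Finset.Icc 1 n, (fhat (z t) - q t) ^ 2) ≤
        Real.sqrt (∑ t ∈ Finset.Icc 1 n, (f (z t) - q t) ^ 2)) :
    msNormSq ((Finset.Icc 1 n).val.map z) (fun x => fhat x - fstar x) ≤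
        2 * B * msNorm ((Finset.Icc 1 n).val.map z) (fun x => fhat x - fstar x) +
          4 * B + 2 * C ∧
      msNorm ((Finset.Icc 1 n).val.map z) (fun x => fhat x - fstar x) ≤
        2 * B + Real.sqrt (4 * B + 2 * C) := by
  set S := msNormSq ((Finset.Icc 1 n).val.map z) (fun x => fhat x - fstar x) with hSdef
  set a := msNorm ((Finset.Icc 1 n).val.map z) (fun x => fhat x - fstar x) with hadef
  have hSsum : S = ∑ t ∈ Finset.Icc 1 n, (fhat (z t) - fstar (z t)) ^ 2 := by
    simp only [hSdef, msNormSq, Multiset.map_map]; rfl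
  have hSnonneg : 0 ≤ S := by
    rw [hSsum]; exact Finset.sum_nonneg fun t _ => sq_nonneg _
  have ha2 : a ^ 2 = S := Real.sq_sqrt hSnonneg
  have hanonneg : 0 ≤ a := Real.sqrt_nonneg _
  have h1 : (0:ℝ) ≤ ∑ t ∈ Finset.Icc 1 n, (fhat (z t) - q t) ^ 2 :=
    Finset.sum_nonneg fun t _ => sq_nonneg _
  have hmin' : (∑ t ∈ Finset.Icc 1 n, (fhat (z t) - q t) ^ 2) ≤
      ∑ t ∈ Finset.Icc 1 n, (fstar (z t) - q t) ^ 2 := by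
    have h2 : (0:ℝ) ≤ ∑ t ∈ Finset.Icc 1 n, (fstar (z t) - q t) ^ 2 :=
      Finset.sum_nonneg fun t _ => sq_nonneg _
    calc (∑ t ∈ Finset.Icc 1 n, (fhat (z t) - q t) ^ 2)
        = Real.sqrt (∑ t ∈ Finset.Icc 1 n, (fhat (z t) - q t) ^ 2) ^ 2 :=
          (Real.sq_sqrt h1).symm
      _ ≤ Real.sqrt (∑ t ∈ Finset.Icc 1 n, (fstar (z t) - q t) ^ 2) ^ 2 :=
          pow_le_pow_left₀ (Real.sqrt_nonneg _) (hmin fstar hfstar) 2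
      _ = _ := Real.sq_sqrt h2
  -- expand the square
  have hexp : (∑ t ∈ Finset.Icc 1 n, (fhat (z t) - q t) ^ 2) =
      S + 2 * (∑ t ∈ Finset.Icc 1 n, (fhat (z t) - fstar (z t)) * (fstar (z t) - q t)) +
        ∑ t ∈ Finset.Icc 1 n, (fstar (z t) - q t) ^ 2 := by
    rw [hSsum, Finset.mul_sum, ← Finset.sum_add_distrib, ← Finset.sum_add_distrib]
    apply Finset.sum_congr rfl
    intro t _; ring
  have hc := hcross fhat hfhat
  rw [← hadef] at hc
  have hfirst : S ≤ 2 * B * a + 4 * B + 2 * C := by nlinarith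
  refine ⟨hfirst, ?_⟩
  have hs2 : Real.sqrt (4 * B + 2 * C) ^ 2 = 4 * B + 2 * C :=
    Real.sq_sqrt (by linarith)
  have hsnn : 0 ≤ Real.sqrt (4 * B + 2 * C) := Real.sqrt_nonneg _
  nlinarith [sq_nonneg (a - 2 * B - Real.sqrt (4 * B + 2 * C)), sq_nonneg a]
end

section
/- Let X be a set, F a nonempty class of real-valued functions on X, z_1, …, z_n ∈ X with Z the corresponding multiset, q_1, …, q_n ∈ ℝ, and f* : X → ℝ (not necessarily in F). For g : X → ℝ write ‖g‖_D := (∑_{t=1}^n (g(z_t) − q_t)²)^{1/2}. Let B, C, M, ζ ≥ 0 and suppose: (i) for every f ∈ F, ∑_{t=1}^{n} (f(z_t) − f*(z_t))·(f*(z_t) − q_t) ≥ −B·(‖f − f*‖_Z + 2) − C; (ii) there exists f̃ ∈ F with ‖f̃ − f*‖_Z ≤ √n·ζ; and (iii) f̂ ∈ F is a least-squares minimizer (‖f̂‖_D ≤ ‖f‖_D for all f ∈ F) with ‖f̂‖_D + ‖f*‖_D ≤ M. Then ‖f̂ − f*‖²_Z ≤ 2B·‖f̂ − f*‖_Z + 4B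 + 2C + M·√n·ζ, and consequently ‖f̂ − f*‖_Z ≤ 2B + √(4B + 2C + M·√n·ζ). -/
set_option maxHeartbeats 1000000

/-- the deterministic core of the misspecified single-step optimization
error bound, Lemma 12 of the paper: with a misspecification error `ζ` (some `f̃ ∈ F` is
`√n·ζ`-close to `f*` on the data), a least-squares minimizer `f̂` satisfies
`‖f̂ − f*‖²_Z ≤ 2B‖f̂ − f*‖_Z + 4B + 2C + M√n·ζ`, and consequently
`‖f̂ − f*‖_Z ≤ 2B + √(4B + 2C + M√n·ζ)`. -/
theorem misspecified_least_squares_inequality {X : Type*}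
    (F : Set (X → ℝ)) (hFne : F.Nonempty)
    (n : ℕ) (z : ℕ → X) (q : ℕ → ℝ)
    (fstar : X → ℝ)
    (B C M ζ : ℝ) (hB : 0 ≤ B) (hC : 0 ≤ C) (hM : 0 ≤ M) (hζ : 0 ≤ ζ)
    (hcross : ∀ f ∈ F,
      -B * (msNorm ((Finset.Icc 1 n).val.map z) (fun x => f x - fstar x) + 2) - C ≤
        ∑ t ∈ Finset.Icc 1 n, (f (z t) - fstar (z t)) * (fstar (z t) - q t))
    (hmis : ∃ ftilde ∈ F,
      msNorm ((Finset.Icc 1 n).val.map z) (fun x => ftilde x - fstar x) ≤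
        Real.sqrt (n : ℝ) * ζ)
    (fhat : X → ℝ) (hfhat : fhat ∈ F)
    (hmin : ∀ f ∈ F,
      Real.sqrt (∑ t ∈ Finset.Icc 1 n, (fhat (z t) - q t) ^ 2) ≤
        Real.sqrt (∑ t ∈ Finset.Icc 1 n, (f (z t) - q t) ^ 2))
    (hM2 : Real.sqrt (∑ t ∈ Finset.Icc 1 n, (fhat (z t) - q t) ^ 2) +
        Real.sqrt (∑ t ∈ Finset.Icc 1 n, (fstar (z t) - q t) ^ 2) ≤ M) :
    msNormSq ((Finset.Icc 1 n).val.map z) (fun x => fhat x - fstar x) ≤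
        2 * B * msNorm ((Finset.Icc 1 n).val.map z) (fun x => fhat x - fstar x) +
          4 * B + 2 * C + M * Real.sqrt (n : ℝ) * ζ ∧
      msNorm ((Finset.Icc 1 n).val.map z) (fun x => fhat x - fstar x) ≤
        2 * B + Real.sqrt (4 * B + 2 * C + M * Real.sqrt (n : ℝ) * ζ) := by
  obtain ⟨ft, hft, hftz⟩ := hmis
  set S := Finset.Icc 1 n with hS
  have hsumeq : ∀ g : X → ℝ, msNormSq (S.val.map z) g = ∑ t ∈ S, g (z t) ^ 2 := by
    intro g
    simp only [msNormSq, Multiset.map_map, Function.comp]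
    rfl
  have hnormeq : ∀ g : X → ℝ,
      msNorm (S.val.map z) g = Real.sqrt (∑ t ∈ S, g (z t) ^ 2) := by
    intro g; rw [msNorm, hsumeq]
  set A := ∑ t ∈ S, (fhat (z t) - fstar (z t)) ^ 2 with hAdef
  have hAnn : 0 ≤ A := Finset.sum_nonneg fun t _ => sq_nonneg _
  set x := Real.sqrt A with hxdef
  have hxnn : 0 ≤ x := Real.sqrt_nonneg _
  set u := Real.sqrt (∑ t ∈ S, (fhat (z t) - q t) ^ 2) with hudef
  set v := Real.sqrt (∑ t ∈ S, (fstar (z t) - q t) ^ 2) with hvdef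
  set w := Real.sqrt (∑ t ∈ S, (ft (z t) - q t) ^ 2) with hwdef
  have hu2 : u ^ 2 = ∑ t ∈ S, (fhat (z t) - q t) ^ 2 :=
    Real.sq_sqrt (Finset.sum_nonneg fun t _ => sq_nonneg _)
  have hv2 : v ^ 2 = ∑ t ∈ S, (fstar (z t) - q t) ^ 2 :=
    Real.sq_sqrt (Finset.sum_nonneg fun t _ => sq_nonneg _)
  have hw2 : w ^ 2 = ∑ t ∈ S, (ft (z t) - q t) ^ 2 :=
    Real.sq_sqrt (Finset.sum_nonneg fun t _ => sq_nonneg _)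
  have hunn : 0 ≤ u := Real.sqrt_nonneg _
  have hvnn : 0 ≤ v := Real.sqrt_nonneg _
  have hwnn : 0 ≤ w := Real.sqrt_nonneg _
  -- decomposition of A
  have hA : A = u ^ 2 - v ^ 2
      - 2 * ∑ t ∈ S, (fhat (z t) - fstar (z t)) * (fstar (z t) - q t) := by
    rw [hu2, hv2, Finset.mul_sum, ← Finset.sum_sub_distrib, ← Finset.sum_sub_distrib]
    exact Finset.sum_congr rfl fun t _ => by ring
  -- cross term bound
  have hc : -B * (x + 2) - C ≤
      ∑ t ∈ S, (fhat (z t) - fstar (z t)) * (fstar (z t) - q t) := by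
    have := hcross fhat hfhat
    rwa [hnormeq] at this
  -- triangle inequality: w ≤ v + ‖ft - fstar‖
  have hcs := Real.sum_mul_le_sqrt_mul_sqrt S
    (fun t => ft (z t) - fstar (z t)) (fun t => fstar (z t) - q t)
  set y := Real.sqrt (∑ t ∈ S, (ft (z t) - fstar (z t)) ^ 2) with hydef
  have hynn : 0 ≤ y := Real.sqrt_nonneg _
  have hy2 : y ^ 2 = ∑ t ∈ S, (ft (z t) - fstar (z t)) ^ 2 :=
    Real.sq_sqrt (Finset.sum_nonneg fun t _ => sq_nonneg _)
  have htri : w ≤ y + v := by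
    have hsq : w ^ 2 ≤ (y + v) ^ 2 := by
      rw [hw2]
      have hexp : ∑ t ∈ S, (ft (z t) - q t) ^ 2 =
          (∑ t ∈ S, (ft (z t) - fstar (z t)) ^ 2)
          + 2 * (∑ t ∈ S, (ft (z t) - fstar (z t)) * (fstar (z t) - q t))
          + ∑ t ∈ S, (fstar (z t) - q t) ^ 2 := by
        rw [Finset.mul_sum, ← Finset.sum_add_distrib, ← Finset.sum_add_distrib]
        exact Finset.sum_congr rfl fun t _ => by ring
      rw [hexp]
      nlinarith [hcs, hy2, hv2]
    nlinarith [hsq, hwnn, hynn, hvnn]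
  have hyle : y ≤ Real.sqrt (n : ℝ) * ζ := by
    have := hftz; rwa [hnormeq] at this
  -- u^2 - v^2 ≤ M * √n * ζ
  have huw : u ≤ w := hmin ft hft
  have hMnz : 0 ≤ M * Real.sqrt (n : ℝ) * ζ :=
    mul_nonneg (mul_nonneg hM (Real.sqrt_nonneg _)) hζ
  have hD : u ^ 2 - v ^ 2 ≤ M * Real.sqrt (n : ℝ) * ζ := by
    rcases le_or_gt u v with h | h
    · nlinarith
    · have h1 : u - v ≤ Real.sqrt (n : ℝ) * ζ := by
        calc u - v ≤ w - v := by linarith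
        _ ≤ y := by linarith
        _ ≤ _ := hyle
      have h2 : u + v ≤ M := hM2
      nlinarith [mul_nonneg (Real.sqrt_nonneg (n : ℝ)) hζ]
  -- first conclusion
  have hmain : A ≤ 2 * B * x + 4 * B + 2 * C + M * Real.sqrt (n : ℝ) * ζ := by
    rw [hA]; nlinarith [hc, hD]
  have hx2 : x ^ 2 = A := Real.sq_sqrt hAnn
  constructor
  · rw [hsumeq, hnormeq]; exact hmain
  · rw [hnormeq]
    show x ≤ 2 * B + Real.sqrt (4 * B + 2 * C + M * Real.sqrt (n : ℝ) * ζ)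
    set D := 4 * B + 2 * C + M * Real.sqrt (n : ℝ) * ζ with hDdef
    have hDnn : 0 ≤ D := by positivity
    set s := Real.sqrt D with hsdef
    have hsnn : 0 ≤ s := Real.sqrt_nonneg _
    have hs2 : s ^ 2 = D := Real.sq_sqrt hDnn
    nlinarith [hmain, hx2, sq_nonneg (x - B - s), mul_nonneg hB hsnn, mul_nonneg hxnn hsnn]
end

section
/- Let X be a set, H ≥ 1 an integer, F a class of functions from X to [0, H+1], n ≥ 2 an integer, 0 < λ ≤ n, and let z_1, …, z_n be a sequence of elements of X with Z the corresponding multiset. Set A := ⌈log₂((H+1)²·n/λ)⌉ and, for each α ∈ {0, …, A−1}, ε_α := (H+1)·2^{−(α+1)/2}. For each α, let N_α be a positive integer and construct multisets Z^α_1, …, Z^α_{N_α} greedily: starting from empty multisets and processing i = 1, …, n in order, let j^α(z_i) be the least j ∈ [N_α] such that z_i is ε_α-independent (with respect to F) of the current contents of Z^α_j, and add z_i to Z^α_{j^α(z_i)}; if z_i is ε_α-dependent on the current contents of all of Z^α_1, …, Z^α_{N_α}, set j^α(z_i) := N_α + 1 and add z_i to no multiset. Define sens^est(z_i) := 1/n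 + ∑_{α=0}^{A−1} 2/j^α(z_i). Then sens^est(z_i) ≥ sensitivity_{Z,F,λ}(z_i) for every i ∈ [n]. -/
/-- The contents of bin `Z^α_j` just before index `i` is processed: the multiset of all
`z_m` with `1 ≤ m ≤ i − 1` which were assigned to bin `j` at level `α`. -/
def greedyBin {X : Type*} (z : ℕ → X) (jA : ℕ → ℕ → ℕ) (α j i : ℕ) : Multiset X :=
  ((Finset.Icc 1 (i - 1)).filter (fun m => jA α m = j)).val.map z

/-- The greedy assignment rule: for each level `α < A` and each index `i ∈ [1, n]`, either
`j^α(i)` is the least `j ∈ [1, N_α]` such that `z_i` is `ε_α`-independent of the current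
contents of bin `j` (so `z_i` is `ε_α`-dependent on the contents of every earlier bin), or
`z_i` is `ε_α`-dependent on the contents of every bin and `j^α(i) = N_α + 1`. -/
def GreedySpec {X : Type*} (F : Set (X → ℝ)) (z : ℕ → X) (n A : ℕ)
    (eps : ℕ → ℝ) (Nb : ℕ → ℕ) (jA : ℕ → ℕ → ℕ) : Prop :=
  ∀ α < A, ∀ i ∈ Finset.Icc 1 n,
    (jA α i ∈ Finset.Icc 1 (Nb α) ∧
      ¬ EpsDep F (eps α) (greedyBin z jA α (jA α i) i) (z i) ∧
      ∀ j ∈ Finset.Icc 1 (jA α i - 1), EpsDep F (eps α) (greedyBin z jA α j i) (z i)) ∨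
    (jA α i = Nb α + 1 ∧
      ∀ j ∈ Finset.Icc 1 (Nb α), EpsDep F (eps α) (greedyBin z jA α j i) (z i))

lemma msNormSq_map {X : Type*} (s : Finset ℕ) (z : ℕ → X) (g : X → ℝ) :
    msNormSq (s.val.map z) g = ∑ m ∈ s, g (z m) ^ 2 := by
  unfold msNormSq
  rw [Multiset.map_map]
  rfl

lemma epsDep_normSq_lt {X : Type*} {F : Set (X → ℝ)} {ε : ℝ} {Z : Multiset X} {z : X}
    (hdep : EpsDep F ε Z z) {f f' : X → ℝ} (hf : f ∈ F) (hf' : f' ∈ F) (hε : 0 ≤ ε)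
    (ht : ε ^ 2 < (f z - f' z) ^ 2) :
    ε ^ 2 < msNormSq Z (fun x => f x - f' x) := by
  by_contra h
  push_neg at h
  have h1 : msNorm Z (fun x => f x - f' x) ≤ ε := by
    have := Real.sqrt_le_sqrt h
    rwa [Real.sqrt_sq hε] at this
  have h2 := hdep f hf f' hf' h1
  have : (f z - f' z) ^ 2 ≤ ε ^ 2 := by
    rw [← sq_abs]
    exact pow_le_pow_left₀ (abs_nonneg _) h2 2
  linarith

lemma aux_sum (n i J : ℕ) (hi : i ∈ Finset.Icc 1 n) (c : ℕ → ℕ) (φ : ℕ → ℝ)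
    (hφ : ∀ m, 0 ≤ φ m) :
    φ i + ∑ j ∈ Finset.Icc 1 J, ∑ m ∈ (Finset.Icc 1 (i - 1)).filter (fun m => c m = j), φ m
      ≤ ∑ m ∈ Finset.Icc 1 n, φ m := by
  simp only [Finset.mem_Icc] at hi
  rw [Finset.sum_fiberwise_eq_sum_filter]
  have hnotmem : i ∉ (Finset.Icc 1 (i - 1)).filter (fun m => c m ∈ Finset.Icc 1 J) := by
    simp only [Finset.mem_filter, Finset.mem_Icc]
    rintro ⟨⟨-, h2⟩, -⟩
    omega
  have h1 : φ i + ∑ m ∈ (Finset.Icc 1 (i - 1)).filter (fun m => c m ∈ Finset.Icc 1 J), φ m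
      = ∑ m ∈ insert i ((Finset.Icc 1 (i - 1)).filter (fun m => c m ∈ Finset.Icc 1 J)), φ m :=
    (Finset.sum_insert hnotmem).symm
  rw [h1]
  apply Finset.sum_le_sum_of_subset_of_nonneg
  · intro m hm
    simp only [Finset.mem_insert, Finset.mem_filter, Finset.mem_Icc] at hm
    simp only [Finset.mem_Icc]
    rcases hm with rfl | ⟨⟨h1', h2'⟩, -⟩ <;> omega
  · intro m _ _
    exact hφ m

set_option maxHeartbeats 1000000 in
/-- correctness of Algorithm 4 of the paper: the greedily computed estimate
`sens^est(z_i) = 1/n + ∑_{α<A} 2/j^α(i)` is an upper bound on the true `λ`-sensitivity. -/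
theorem sensitivity_estimate_is_upper_bound {X : Type*} (H : ℕ) (hH : 1 ≤ H)
    (F : Set (X → ℝ)) (hF : ∀ f ∈ F, ∀ x, f x ∈ Set.Icc (0 : ℝ) (H + 1))
    (n : ℕ) (hn : 2 ≤ n)
    (lam : ℝ) (hlam0 : 0 < lam) (hlam1 : lam ≤ (n : ℝ))
    (z : ℕ → X)
    (Nb : ℕ → ℕ)
    (hNb : ∀ α < ⌈Real.logb 2 (((H : ℝ) + 1) ^ 2 * n / lam)⌉₊, 1 ≤ Nb α)
    (jA : ℕ → ℕ → ℕ)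
    (hgreedy : GreedySpec F z n ⌈Real.logb 2 (((H : ℝ) + 1) ^ 2 * n / lam)⌉₊
      (fun α => ((H : ℝ) + 1) * (2 : ℝ) ^ (-(((α : ℝ) + 1) / 2))) Nb jA) :
    ∀ i ∈ Finset.Icc 1 n,
      sensitivity F lam ((Finset.Icc 1 n).val.map z) (z i) ≤
        1 / (n : ℝ) +
          ∑ α ∈ Finset.range ⌈Real.logb 2 (((H : ℝ) + 1) ^ 2 * n / lam)⌉₊,
            2 / (jA α i : ℝ) := by
  classical
  intro i hi
  set A := ⌈Real.logb 2 (((H : ℝ) + 1) ^ 2 * n / lam)⌉₊ with hA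
  have hn0 : (0 : ℝ) < n := by positivity
  have hH1 : (2 : ℝ) ≤ (H : ℝ) + 1 := by
    have : (1 : ℝ) ≤ (H : ℝ) := by exact_mod_cast hH
    linarith
  -- nonnegativity of the RHS pieces
  have hterm_nonneg : ∀ α ∈ Finset.range A, 0 ≤ 2 / (jA α i : ℝ) := by
    intro α _; positivity
  have hRHS0 : 0 ≤ 1 / (n : ℝ) + ∑ α ∈ Finset.range A, 2 / (jA α i : ℝ) := by
    have := Finset.sum_nonneg hterm_nonneg
    positivity
  apply Real.sSup_le _ hRHS0
  rintro r ⟨f, hf, f', hf', hls, rfl⟩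
  set g : X → ℝ := fun x => f x - f' x with hg
  set s : ℝ := msNormSq ((Finset.Icc 1 n).val.map z) g with hsdef
  set t : ℝ := (f (z i) - f' (z i)) ^ 2 with htdef
  have hs0 : 0 < s := lt_of_lt_of_le hlam0 hls
  have hseq : s = ∑ m ∈ Finset.Icc 1 n, g (z m) ^ 2 := msNormSq_map _ z g
  have ht0 : 0 ≤ t := sq_nonneg _
  have htH : t ≤ ((H : ℝ) + 1) ^ 2 := by
    obtain ⟨h1, h2⟩ := hF f hf (z i)
    obtain ⟨h3, h4⟩ := hF f' hf' (z i)
    rw [htdef]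
    nlinarith
  by_cases hcase : t ≤ s / n
  · -- small case: r ≤ 1/n
    have h1 : t / s ≤ 1 / n := by
      rw [div_le_div_iff₀ hs0 hn0]
      calc t * n ≤ (s / n) * n := by nlinarith
        _ = 1 * s := by field_simp
    have h2 : 0 ≤ ∑ α ∈ Finset.range A, 2 / (jA α i : ℝ) := Finset.sum_nonneg hterm_nonneg
    linarith
  · push_neg at hcase
    have ht0' : 0 < t := lt_of_le_of_lt (by positivity) hcase
    -- squared thresholds
    set e2 : ℕ → ℝ := fun α => ((H : ℝ) + 1) ^ 2 * (2 : ℝ) ^ (-((α : ℝ) + 1)) with he2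
    have hsq : ∀ α : ℕ, (((H : ℝ) + 1) * (2 : ℝ) ^ (-(((α : ℝ) + 1) / 2))) ^ 2 = e2 α := by
      intro α
      rw [he2]
      simp only
      rw [mul_pow, ← Real.rpow_natCast ((2 : ℝ) ^ (-(((α : ℝ) + 1) / 2))) 2,
        ← Real.rpow_mul (by norm_num)]
      congr 1
      push_cast
      ring
    have he2pos : ∀ α : ℕ, 0 < e2 α := by
      intro α
      have : (0:ℝ) < (2 : ℝ) ^ (-((α : ℝ) + 1)) := Real.rpow_pos_of_pos (by norm_num) _
      positivity
    -- A ≥ 1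
    have hx0 : (0 : ℝ) < ((H : ℝ) + 1) ^ 2 * n / lam := by positivity
    have hx1 : (1 : ℝ) < ((H : ℝ) + 1) ^ 2 * n / lam := by
      rw [lt_div_iff₀ hlam0]
      have hn2 : (2 : ℝ) ≤ (n : ℝ) := by exact_mod_cast hn
      have h4 : (4 : ℝ) ≤ ((H : ℝ) + 1) ^ 2 := by nlinarith
      nlinarith [mul_le_mul_of_nonneg_right h4 hn0.le]
    have hA1 : 1 ≤ A := Nat.one_le_ceil_iff.mpr (Real.logb_pos (by norm_num) hx1)
    -- 2^A ≥ (H+1)^2 n / λ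
    have h2A : ((H : ℝ) + 1) ^ 2 * n / lam ≤ (2 : ℝ) ^ (A : ℝ) := by
      have hle : Real.logb 2 (((H : ℝ) + 1) ^ 2 * n / lam) ≤ (A : ℝ) := Nat.le_ceil _
      calc ((H : ℝ) + 1) ^ 2 * n / lam
          = (2 : ℝ) ^ Real.logb 2 (((H : ℝ) + 1) ^ 2 * n / lam) :=
            (Real.rpow_logb (by norm_num) (by norm_num) hx0).symm
        _ ≤ (2 : ℝ) ^ (A : ℝ) := (Real.rpow_le_rpow_left_iff (by norm_num)).mpr hle
    -- e2 (A-1) ≤ lam / n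
    have hlast : e2 (A - 1) ≤ lam / n := by
      have hcast : (((A - 1 : ℕ) : ℝ) + 1) = (A : ℝ) := by
        have := Nat.cast_sub hA1 (R := ℝ)
        push_cast [this]
        ring
      have h2Apos : (0 : ℝ) < (2 : ℝ) ^ (A : ℝ) := Real.rpow_pos_of_pos (by norm_num) _
      have : e2 (A - 1) = ((H : ℝ) + 1) ^ 2 / (2 : ℝ) ^ (A : ℝ) := by
        rw [he2]
        simp only
        rw [hcast, Real.rpow_neg (by norm_num)]
        ring
      rw [this, div_le_div_iff₀ h2Apos hn0]
      have := (div_le_iff₀ hlam0).mp h2A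
      nlinarith
    -- choose the level α
    have hP_ex : ∃ α : ℕ, e2 α < t := by
      refine ⟨A - 1, lt_of_le_of_lt hlast ?_⟩
      calc lam / n ≤ s / n := (div_le_div_iff_of_pos_right hn0).mpr hls
        _ < t := hcase
    obtain ⟨α, hPα, hmin⟩ : ∃ α, e2 α < t ∧ ∀ k < α, ¬ e2 k < t :=
      ⟨Nat.find hP_ex, Nat.find_spec hP_ex, fun k hk => Nat.find_min hP_ex hk⟩
    have hlastlt : e2 (A - 1) < t :=
      lt_of_le_of_lt hlast (lt_of_le_of_lt ((div_le_div_iff_of_pos_right hn0).mpr hls) hcase)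
    have hαA : α < A := by
      by_contra hcon
      push_neg at hcon
      exact hmin (A - 1) (by omega) hlastlt
    have h2e2 : 2 * e2 α = ((H : ℝ) + 1) ^ 2 * (2 : ℝ) ^ (-(α : ℝ)) := by
      rw [he2]
      simp only
      rw [show (-(α : ℝ)) = -((α : ℝ) + 1) + 1 by ring, Real.rpow_add (by norm_num),
        Real.rpow_one]
      ring
    -- upper bound: t ≤ 2 * e2 α
    have hupper : t ≤ 2 * e2 α := by
      rw [h2e2]
      rcases Nat.eq_zero_or_pos α with h0 | hpos
      · subst h0; simpa using htH
      · have hnot := hmin (α - 1) (by omega)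
        push_neg at hnot
        have heq' : e2 (α - 1) = ((H : ℝ) + 1) ^ 2 * (2 : ℝ) ^ (-(α : ℝ)) := by
          rw [he2]
          simp only
          congr 2
          have : ((α - 1 : ℕ) : ℝ) = (α : ℝ) - 1 := by
            push_cast [Nat.cast_sub hpos]; ring
          rw [this]
          ring
        rw [heq'] at hnot
        exact hnot
    -- extract the greedy data at level α
    set J := jA α i with hJ
    obtain ⟨hJ1, hdeps⟩ :
        1 ≤ J ∧ ∀ j ∈ Finset.Icc 1 (J - 1),
          EpsDep F (((H : ℝ) + 1) * (2 : ℝ) ^ (-(((α : ℝ) + 1) / 2)))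
            (greedyBin z jA α j i) (z i) := by
      rcases hgreedy α hαA i hi with ⟨hmem, -, hd⟩ | ⟨heq, hd⟩
      · exact ⟨(Finset.mem_Icc.mp hmem).1, hd⟩
      · refine ⟨by omega, ?_⟩
        rw [hJ, heq]
        simpa using hd
    -- each earlier bin has squared norm > e2 α
    have hbin : ∀ j ∈ Finset.Icc 1 (J - 1),
        e2 α < ∑ m ∈ (Finset.Icc 1 (i - 1)).filter (fun m => jA α m = j), g (z m) ^ 2 := by
      intro j hj
      have h1 := epsDep_normSq_lt (hdeps j hj) hf hf' (by positivity) (by rw [hsq]; exact hPα)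
      rw [hsq] at h1
      have : msNormSq (greedyBin z jA α j i) g
          = ∑ m ∈ (Finset.Icc 1 (i - 1)).filter (fun m => jA α m = j), g (z m) ^ 2 := by
        rw [greedyBin, msNormSq_map]
      rwa [this] at h1
    -- lower bound on s
    have hslow : t + ((J : ℝ) - 1) * e2 α ≤ s := by
      have hsum : ((J : ℝ) - 1) * e2 α
          ≤ ∑ j ∈ Finset.Icc 1 (J - 1),
              ∑ m ∈ (Finset.Icc 1 (i - 1)).filter (fun m => jA α m = j), g (z m) ^ 2 := by
        have h1 : ∑ j ∈ Finset.Icc 1 (J - 1), e2 α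
            ≤ ∑ j ∈ Finset.Icc 1 (J - 1),
              ∑ m ∈ (Finset.Icc 1 (i - 1)).filter (fun m => jA α m = j), g (z m) ^ 2 :=
          Finset.sum_le_sum (fun j hj => (hbin j hj).le)
        have h2 : ∑ _j ∈ Finset.Icc 1 (J - 1), e2 α = ((J : ℝ) - 1) * e2 α := by
          rw [Finset.sum_const, Nat.card_Icc]
          have : ((J - 1 + 1 - 1 : ℕ) : ℝ) = (J : ℝ) - 1 := by
            push_cast [Nat.cast_sub hJ1]; ring_nf
          rw [nsmul_eq_mul, this]
        linarith
      have haux : g (z i) ^ 2 +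
          ∑ j ∈ Finset.Icc 1 (J - 1),
            ∑ m ∈ Finset.filter (fun m => jA α m = j) (Finset.Icc 1 (i - 1)), g (z m) ^ 2
          ≤ ∑ m ∈ Finset.Icc 1 n, g (z m) ^ 2 :=
        aux_sum n i (J - 1) hi (jA α) (fun m => g (z m) ^ 2) (fun m => sq_nonneg _)
      rw [← hseq] at haux
      have hti : g (z i) ^ 2 = t := rfl
      linarith
    -- conclude: t/s ≤ 2/J
    have hJpos : (0 : ℝ) < (J : ℝ) := by exact_mod_cast hJ1
    have hJ1' : (1 : ℝ) ≤ (J : ℝ) := by exact_mod_cast hJ1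
    have hfin : t / s ≤ 2 / (J : ℝ) := by
      have he2α : 0 < e2 α := he2pos α
      clear_value t s g
      rw [div_le_div_iff₀ hs0 hJpos]
      have hkey : ((J : ℝ) - 1) * (2 * e2 α - t) ≥ 0 :=
        mul_nonneg (by linarith) (by linarith)
      nlinarith [hkey, hslow, ht0]
    have hsingle : 2 / (J : ℝ) ≤ ∑ α' ∈ Finset.range A, 2 / (jA α' i : ℝ) := by
      exact Finset.single_le_sum hterm_nonneg (Finset.mem_range.mpr hαA)
    have h1n : 0 ≤ 1 / (n : ℝ) := by positivity
    linarith
end
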